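/- arXiv:2402.04899 — 11 statements merged into one kernel-verified Lean document; each statement's English description precedes it below -/
import Mathlib

section
/- For the staged progression epidemic system with initial condition S(0) > 0, I(0) ≥ 0, I(0) ≠ 0, and for any t₀ ≥ 0 and j ∈ {1,…,n}, the series ∑_{t≥t₀} Iⱼ(t) converges and equals (1/γⱼ)(S(t₀) − S∞ + ∑_{i=1}^{j} Iᵢ(t₀)), where S∞ = lim S(t). -/
open Filter Topology

/-- The set of admissible infected-population vectors when the total population is `N`. -/
def stateSet (n : ℕ) (N : ℝ) : Set (Fin n → ℝ) :=
  {I | (∀ j, 0 ≤ I j) ∧ ∑ j, I j ≤ N}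

/-- Hypothesis (H) on the incidence function `φ`: it is C², vanishes at `0`, takes values
in `[0,1)` on the admissible set, has nonnegative gradient there, its partial derivative
with respect to the last class at `0` is positive, and it is concave (down). -/
def HypH (n : ℕ) (N : ℝ) (φ : (Fin n → ℝ) → ℝ) : Prop :=
  ContDiff ℝ 2 φ ∧ φ 0 = 0 ∧
  (∀ I ∈ stateSet n N, 0 ≤ φ I ∧ φ I < 1) ∧
  (∀ I ∈ stateSet n N, ∀ j, 0 ≤ fderiv ℝ φ I (Pi.single j 1)) ∧
  (∀ h : 0 < n, 0 < fderiv ℝ φ 0 (Pi.single (⟨n - 1, Nat.sub_lt h Nat.one_pos⟩ : Fin n) 1)) ∧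
  ConcaveOn ℝ (stateSet n N) φ

/-- The discrete-time staged progression epidemic system:
`S(t+1) = (1−φ(I(t)))S(t)`, `I₁(t+1) = (1−γ₁)I₁(t) + φ(I(t))S(t)`,
`Iⱼ(t+1) = (1−γⱼ)Iⱼ(t) + γⱼ₋₁Iⱼ₋₁(t)` for `2 ≤ j ≤ n`. -/
def SPSystem {n : ℕ} (γ : Fin n → ℝ) (φ : (Fin n → ℝ) → ℝ)
    (S : ℕ → ℝ) (I : ℕ → Fin n → ℝ) : Prop :=
  (∀ t, S (t + 1) = (1 - φ (I t)) * S t) ∧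
  (∀ t, ∀ h0 : 0 < n, I (t + 1) ⟨0, h0⟩ = (1 - γ ⟨0, h0⟩) * I t ⟨0, h0⟩ + φ (I t) * S t) ∧
  (∀ t, ∀ j : Fin n, ∀ h : j.val + 1 < n,
    I (t + 1) ⟨j.val + 1, h⟩ = (1 - γ ⟨j.val + 1, h⟩) * I t ⟨j.val + 1, h⟩ + γ j * I t j)

/-- Admissible initial condition: `S(0) > 0`, `I(0) ≥ 0`, `I(0) ≠ 0`, `S(0)+‖I(0)‖₁ ≤ N`. -/
def AdmissibleIC {n : ℕ} (N : ℝ) (S : ℕ → ℝ) (I : ℕ → Fin n → ℝ) : Prop :=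
  0 < S 0 ∧ (∀ j, 0 ≤ I 0 j) ∧ I 0 ≠ 0 ∧ S 0 + ∑ j, I 0 j ≤ N

/-- for any `t₀` and any class `j`, the series `∑_{t ≥ t₀} Iⱼ(t)` converges
and equals `(1/γⱼ)(S(t₀) − S∞ + ∑_{i=1}^{j} Iᵢ(t₀))`. -/
theorem sp_series_formula
    (n : ℕ) (hn : 0 < n) (N : ℝ) (hN : 0 < N)
    (γ : Fin n → ℝ) (hγ : ∀ j, γ j ∈ Set.Ioo (0 : ℝ) 1)
    (φ : (Fin n → ℝ) → ℝ) (hφ : HypH n N φ)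
    (S : ℕ → ℝ) (I : ℕ → Fin n → ℝ)
    (hsys : SPSystem γ φ S I) (hic : AdmissibleIC N S I)
    (Sinf : ℝ) (hSinf : Filter.Tendsto S Filter.atTop (nhds Sinf))
    (hIlim : ∀ j : Fin n, Filter.Tendsto (fun t => I t j) Filter.atTop (nhds 0)) :
    ∀ (t₀ : ℕ) (j : Fin n),
      HasSum (fun t : ℕ => I (t₀ + t) j)
        ((1 / γ j) * (S t₀ - Sinf + ∑ i ∈ Finset.Iic j, I t₀ i)) := by
  obtain ⟨hS0, hI0, _, hsum0⟩ := hic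
  obtain ⟨_, _, hφrange, _, _, _⟩ := hφ
  obtain ⟨eqS, eqI0, eqIs⟩ := hsys
  -- key algebraic one-step identity
  have key : ∀ t (k : ℕ) (h : k < n),
      S (t+1) + ∑ i ∈ Finset.Iic (⟨k, h⟩ : Fin n), I (t+1) i
        = S t + ∑ i ∈ Finset.Iic (⟨k, h⟩ : Fin n), I t i - γ ⟨k, h⟩ * I t ⟨k, h⟩ := by
    intro t k
    induction k with
    | zero =>
      intro h
      have hIic : Finset.Iic (⟨0, h⟩ : Fin n) = {⟨0, h⟩} := by
        ext i; simp [Fin.le_def, Finset.mem_Iic, Nat.le_zero, Fin.ext_iff]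
      rw [hIic, Finset.sum_singleton, Finset.sum_singleton, eqS t, eqI0 t h]
      ring
    | succ k ih =>
      intro h
      have hk : k < n := Nat.lt_of_succ_lt h
      have hIic : Finset.Iic (⟨k+1, h⟩ : Fin n)
          = insert (⟨k+1, h⟩ : Fin n) (Finset.Iic (⟨k, hk⟩ : Fin n)) := by
        ext i
        simp only [Finset.mem_Iic, Finset.mem_insert, Fin.le_def, Fin.ext_iff]
        omega
      have hnotmem : (⟨k+1, h⟩ : Fin n) ∉ Finset.Iic (⟨k, hk⟩ : Fin n) := by
        simp [Finset.mem_Iic, Fin.le_def]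
      rw [hIic, Finset.sum_insert hnotmem, Finset.sum_insert hnotmem,
        eqIs t ⟨k, hk⟩ h]
      have := ih hk
      linarith [this]
  -- the whole Fin n is Iic of the top index
  have univIic : Finset.Iic (⟨n-1, Nat.sub_lt hn Nat.one_pos⟩ : Fin n) = Finset.univ := by
    ext i
    simp only [Finset.mem_Iic, Finset.mem_univ, iff_true, Fin.le_def]
    omega
  -- invariance: nonnegativity and total bound
  have inv : ∀ t, 0 ≤ S t ∧ (∀ i, 0 ≤ I t i) ∧ S t + ∑ i, I t i ≤ N := by
    intro t
    induction t with
    | zero => exact ⟨le_of_lt hS0, hI0, hsum0⟩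
    | succ t ih =>
      obtain ⟨h1, h2, h3⟩ := ih
      have hst : I t ∈ stateSet n N := by
        refine ⟨h2, ?_⟩; linarith
      obtain ⟨hφ0, hφ1⟩ := hφrange _ hst
      refine ⟨?_, ?_, ?_⟩
      · rw [eqS t]; exact mul_nonneg (by linarith) h1
      · rintro ⟨iv, hiv⟩
        cases iv with
        | zero =>
          rw [eqI0 t hiv]
          have := (hγ ⟨0, hiv⟩).2
          have := h2 ⟨0, hiv⟩
          nlinarith
        | succ k =>
          have hk : k < n := Nat.lt_of_succ_lt hiv
          rw [eqIs t ⟨k, hk⟩ hiv]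
          have := (hγ ⟨k+1, hiv⟩).2
          have := (hγ ⟨k, hk⟩).1
          have := h2 ⟨k+1, hiv⟩
          have := h2 ⟨k, hk⟩
          nlinarith
      · have hkey := key t (n-1) (Nat.sub_lt hn Nat.one_pos)
        rw [univIic] at hkey
        have hγp := (hγ ⟨n-1, Nat.sub_lt hn Nat.one_pos⟩).1
        have hInn := h2 ⟨n-1, Nat.sub_lt hn Nat.one_pos⟩
        nlinarith
  -- limit of V j
  have Vlim : ∀ j : Fin n,
      Filter.Tendsto (fun t => S t + ∑ i ∈ Finset.Iic j, I t i) Filter.atTop (nhds Sinf) := by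
    intro j
    have h := hSinf.add
      (tendsto_finset_sum (Finset.Iic j) (fun i _ => hIlim i))
    simpa using h
  intro t₀ j
  obtain ⟨jv, hjv⟩ := j
  -- telescoping sum
  have tel : ∀ T, ∑ t ∈ Finset.range T, γ ⟨jv, hjv⟩ * I (t₀+t) ⟨jv, hjv⟩
      = (S t₀ + ∑ i ∈ Finset.Iic (⟨jv, hjv⟩ : Fin n), I t₀ i)
        - (S (t₀+T) + ∑ i ∈ Finset.Iic (⟨jv, hjv⟩ : Fin n), I (t₀+T) i) := by
    intro T
    induction T with
    | zero => simp
    | succ T ih =>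
      rw [Finset.sum_range_succ, ih]
      have hkey := key (t₀+T) jv hjv
      rw [show t₀ + (T+1) = (t₀ + T) + 1 by ring]
      linarith
  have hγp := (hγ ⟨jv, hjv⟩).1
  have hconv : Filter.Tendsto
      (fun T => ∑ t ∈ Finset.range T, γ ⟨jv, hjv⟩ * I (t₀+t) ⟨jv, hjv⟩)
      Filter.atTop
      (nhds ((S t₀ + ∑ i ∈ Finset.Iic (⟨jv, hjv⟩ : Fin n), I t₀ i) - Sinf)) := by
    have hVshift : Filter.Tendsto
        (fun T => S (t₀+T) + ∑ i ∈ Finset.Iic (⟨jv, hjv⟩ : Fin n), I (t₀+T) i)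
        Filter.atTop (nhds Sinf) := by
      have := (Vlim ⟨jv, hjv⟩).comp (tendsto_add_atTop_nat t₀)
      simpa [Function.comp_def, add_comm] using this
    have := (tendsto_const_nhds (x := S t₀ + ∑ i ∈ Finset.Iic (⟨jv, hjv⟩ : Fin n), I t₀ i)
      (f := Filter.atTop (α := ℕ))).sub hVshift
    simpa [tel] using this
  have hnonneg : ∀ t : ℕ, 0 ≤ γ ⟨jv, hjv⟩ * I (t₀+t) ⟨jv, hjv⟩ :=
    fun t => mul_nonneg (le_of_lt hγp) ((inv (t₀+t)).2.1 _)
  have hsum1 : HasSum (fun t : ℕ => γ ⟨jv, hjv⟩ * I (t₀+t) ⟨jv, hjv⟩)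
      ((S t₀ + ∑ i ∈ Finset.Iic (⟨jv, hjv⟩ : Fin n), I t₀ i) - Sinf) := by
    rw [hasSum_iff_tendsto_nat_of_nonneg hnonneg]
    exact hconv
  have hsum2 := hsum1.mul_left (1 / γ ⟨jv, hjv⟩)
  have hne : γ (⟨jv, hjv⟩ : Fin n) ≠ 0 := ne_of_gt hγp
  have heq : (fun t : ℕ => 1 / γ ⟨jv, hjv⟩ * (γ ⟨jv, hjv⟩ * I (t₀+t) ⟨jv, hjv⟩))
      = fun t : ℕ => I (t₀+t) ⟨jv, hjv⟩ := by
    funext t; field_simp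
  rw [heq] at hsum2
  convert hsum2 using 1
  rfl
  ring
end

section
/- For the staged progression system and any initial condition with S(0) > 0 and I(0) ≠ 0, the limit S∞ = lim_{t→∞} S(t) is strictly positive. -/
open Filter Topology

/-- Concave `φ` with `φ 0 = 0` lies below its linearization at `0`. -/
theorem sp_concave_lin_bound (n : ℕ) (s : Set (Fin n → ℝ)) (φ : (Fin n → ℝ) → ℝ)
    (hC : ContDiff ℝ 2 φ) (h0 : φ 0 = 0) (hconc : ConcaveOn ℝ s φ)
    (h0s : (0 : Fin n → ℝ) ∈ s) (I : Fin n → ℝ) (hI : I ∈ s) :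
    φ I ≤ fderiv ℝ φ 0 I := by
  set L := fderiv ℝ φ 0
  have hdiff : HasFDerivAt φ L ((0:ℝ) • I) := by
    simpa using ((hC.differentiable (by norm_num)) 0).hasFDerivAt
  have hline : HasDerivAt (fun a : ℝ => a • I) I 0 := by
    simpa using (hasDerivAt_id (0:ℝ)).smul_const I
  have hg : HasDerivAt (fun a : ℝ => φ (a • I)) (L I) 0 := by
    have := hdiff.comp_hasDerivAt 0 hline
    exact this
  have hslope := hasDerivAt_iff_tendsto_slope.1 hg
  have hslope' : Tendsto (slope (fun a : ℝ => φ (a • I)) 0) (𝓝[>] 0) (𝓝 (L I)) :=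
    hslope.mono_left (nhdsWithin_mono 0 (fun x hx => ne_of_gt hx))
  refine ge_of_tendsto hslope' ?_
  filter_upwards [Ioo_mem_nhdsGT_of_mem (by norm_num : (0:ℝ) ∈ Set.Ico 0 1)] with a ha
  have ha0 : 0 < a := ha.1
  have key : a * φ I ≤ φ (a • I) := by
    have := hconc.2 hI h0s ha0.le (by linarith [ha.2] : (0:ℝ) ≤ 1 - a) (by ring)
    simpa [h0] using this
  have hsl : slope (fun a : ℝ => φ (a • I)) 0 a = φ (a • I) / a := by
    simp [slope_def_field, h0]
  rw [hsl, le_div_iff₀ ha0]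
  linarith

/-- One step of the total-population bookkeeping. -/
theorem sp_sum_step (m : ℕ) (γ f g : Fin (m+1) → ℝ) (c : ℝ)
    (h0 : f 0 = (1 - γ 0) * g 0 + c)
    (hs : ∀ j : Fin (m+1), ∀ h : j.val + 1 < m + 1,
      f ⟨j.val + 1, h⟩ = (1 - γ ⟨j.val + 1, h⟩) * g ⟨j.val + 1, h⟩ + γ j * g j) :
    ∑ j, f j = ∑ j, g j + c - γ (Fin.last m) * g (Fin.last m) := by
  have hs' : ∀ j : Fin m, f j.succ = (1 - γ j.succ) * g j.succ + γ j.castSucc * g j.castSucc := by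
    intro j
    have := hs j.castSucc (by simp)
    convert this using 2 <;> rfl
  rw [Fin.sum_univ_succ f, h0]
  have e1 : ∑ j : Fin m, f j.succ
      = ∑ j : Fin m, (1 - γ j.succ) * g j.succ + ∑ j : Fin m, γ j.castSucc * g j.castSucc := by
    rw [← Finset.sum_add_distrib]; exact Finset.sum_congr rfl fun j _ => hs' j
  rw [e1]
  have e2 : (1 - γ 0) * g 0 + ∑ j : Fin m, (1 - γ j.succ) * g j.succ
      = ∑ j : Fin (m+1), (1 - γ j) * g j :=
    (Fin.sum_univ_succ (f := fun j => (1 - γ j) * g j)).symm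
  have e3 : ∑ j : Fin m, γ j.castSucc * g j.castSucc
      = ∑ j : Fin (m+1), γ j * g j - γ (Fin.last m) * g (Fin.last m) := by
    rw [Fin.sum_univ_castSucc (f := fun j => γ j * g j)]; ring
  have e4 : ∑ j : Fin (m+1), (1 - γ j) * g j = ∑ j, g j - ∑ j : Fin (m+1), γ j * g j := by
    rw [← Finset.sum_sub_distrib]; exact Finset.sum_congr rfl fun j _ => by ring
  linarith [e2, e3, e4]

theorem sp_fderiv_decomp (n : ℕ) (L : (Fin n → ℝ) →L[ℝ] ℝ) (I : Fin n → ℝ) :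
    L I = ∑ j, I j * L (Pi.single j 1) := by
  have hI : I = ∑ j, I j • (Pi.single j 1 : Fin n → ℝ) := by
    ext k
    simp [Finset.sum_apply, Pi.single_apply]
  conv_lhs => rw [hI]
  simp [mul_comm]

/-- the limit `S∞` of the susceptible population is strictly positive. -/
theorem sp_Sinf_pos
    (n : ℕ) (hn : 0 < n) (N : ℝ) (hN : 0 < N)
    (γ : Fin n → ℝ) (hγ : ∀ j, γ j ∈ Set.Ioo (0 : ℝ) 1)
    (φ : (Fin n → ℝ) → ℝ) (hφ : HypH n N φ)
    (S : ℕ → ℝ) (I : ℕ → Fin n → ℝ)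
    (hsys : SPSystem γ φ S I) (hic : AdmissibleIC N S I)
    (Sinf : ℝ) (hSinf : Filter.Tendsto S Filter.atTop (nhds Sinf)) :
    0 < Sinf := by
  obtain ⟨hC, hφ0, hrange, hgrad, _hlast, hconc⟩ := hφ
  obtain ⟨hS0, hI0, _hI0ne, hN0⟩ := hic
  obtain ⟨hSrec, h0rec, hsrec⟩ := hsys
  obtain ⟨m, rfl⟩ : ∃ m, n = m + 1 := ⟨n - 1, by omega⟩
  have h0state : (0 : Fin (m+1) → ℝ) ∈ stateSet (m+1) N :=
    ⟨fun j => le_refl 0, by simp [hN.le]⟩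
  -- total population one-step identity
  have tot : ∀ t, S (t+1) + ∑ j, I (t+1) j
      = S t + ∑ j, I t j - γ (Fin.last m) * I t (Fin.last m) := by
    intro t
    have hsum := sp_sum_step m γ (I (t+1)) (I t) (φ (I t) * S t)
      (by simpa using h0rec t (Nat.succ_pos m)) (hsrec t)
    rw [hsum, hSrec t]
    ring
  -- invariance
  have inv : ∀ t, 0 < S t ∧ (∀ j, 0 ≤ I t j) ∧ S t + ∑ j, I t j ≤ N := by
    intro t
    induction t with
    | zero => exact ⟨hS0, hI0, hN0⟩
    | succ t ih =>
      obtain ⟨hSpos, hInn, htot⟩ := ih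
      have hIsum : ∑ j, I t j ≤ N := by linarith
      have hstate : I t ∈ stateSet (m+1) N := ⟨hInn, hIsum⟩
      have hφI := hrange _ hstate
      refine ⟨?_, ?_, ?_⟩
      · rw [hSrec t]
        exact mul_pos (by linarith [hφI.2]) hSpos
      · rintro ⟨jv, hj⟩
        cases jv with
        | zero =>
          rw [h0rec t (Nat.succ_pos m)]
          have hγ0 := hγ (⟨0, Nat.succ_pos m⟩ : Fin (m+1))
          exact add_nonneg (mul_nonneg (by linarith [hγ0.2]) (hInn _))
            (mul_nonneg hφI.1 hSpos.le)
        | succ k =>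
          rw [hsrec t ⟨k, by omega⟩ hj]
          have h1 := hγ ⟨k + 1, hj⟩
          have h2 := hγ (⟨k, by omega⟩ : Fin (m+1))
          have h3 := hInn ⟨k + 1, hj⟩
          have h4 := hInn (⟨k, by omega⟩ : Fin (m+1))
          exact add_nonneg (mul_nonneg (by linarith [h1.2]) h3) (mul_nonneg h2.1.le h4)
      · have hγl := hγ (Fin.last m)
        have hIl := hInn (Fin.last m)
        have := tot t
        have h5 : 0 ≤ γ (Fin.last m) * I t (Fin.last m) := mul_nonneg hγl.1.le hIl
        linarith
  -- telescoped last-class partial sums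
  have lastsum : ∀ T, γ (Fin.last m) * ∑ t ∈ Finset.range T, I t (Fin.last m)
      = (S 0 + ∑ j, I 0 j) - (S T + ∑ j, I T j) := by
    intro T
    induction T with
    | zero => simp
    | succ T ih =>
      rw [Finset.sum_range_succ, mul_add, ih, tot T]
      ring
  -- bounded partial sums for every class
  have bdd : ∀ j : Fin (m+1), ∃ B, 0 ≤ B ∧ ∀ T, ∑ t ∈ Finset.range T, I t j ≤ B := by
    intro j
    induction j using Fin.reverseInduction with
    | last =>
      have hγl := hγ (Fin.last m)
      refine ⟨N / γ (Fin.last m), div_nonneg hN.le hγl.1.le, fun T => ?_⟩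
      rw [le_div_iff₀ hγl.1, mul_comm]
      have h1 := lastsum T
      have h2 := (inv T).1
      have h3 : 0 ≤ ∑ j, I T j := Finset.sum_nonneg fun j _ => (inv T).2.1 j
      linarith
    | cast j ih =>
      obtain ⟨B, hB0, hB⟩ := ih
      have hrec : ∀ t, I (t+1) j.succ
          = (1 - γ j.succ) * I t j.succ + γ j.castSucc * I t j.castSucc := by
        intro t
        have := hsrec t j.castSucc (by simp)
        convert this using 2 <;> rfl
      have tele : ∀ T, γ j.castSucc * ∑ t ∈ Finset.range T, I t j.castSucc
          = I T j.succ - I 0 j.succ + γ j.succ * ∑ t ∈ Finset.range T, I t j.succ := by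
        intro T
        induction T with
        | zero => simp
        | succ T ihT =>
          rw [Finset.sum_range_succ, Finset.sum_range_succ, mul_add, mul_add, ihT, hrec T]
          ring
      have hγc := hγ j.castSucc
      have hγs := hγ j.succ
      refine ⟨(N + B) / γ j.castSucc, div_nonneg (by linarith) hγc.1.le, fun T => ?_⟩
      rw [le_div_iff₀ hγc.1, mul_comm]
      rw [tele T]
      have h1 : I T j.succ ≤ N := by
        have h2 := (inv T).1
        have h3 : I T j.succ ≤ ∑ j, I T j :=
          Finset.single_le_sum (fun k _ => (inv T).2.1 k) (Finset.mem_univ _)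
        linarith [(inv T).2.2]
      have h4 : 0 ≤ I 0 j.succ := hI0 _
      have h5 : γ j.succ * ∑ t ∈ Finset.range T, I t j.succ ≤ 1 * B := by
        apply mul_le_mul hγs.2.le (hB T) ?_ (by norm_num)
        exact Finset.sum_nonneg fun t _ => (inv t).2.1 _
      linarith
  -- summability of φ (I t)
  have hsummI : ∀ j : Fin (m+1), Summable (fun t => I t j) := by
    intro j
    obtain ⟨B, _, hB⟩ := bdd j
    exact summable_of_sum_range_le (fun t => (inv t).2.1 j) hB
  set c : Fin (m+1) → ℝ := fun j => fderiv ℝ φ 0 (Pi.single j 1) with hc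
  have hc0 : ∀ j, 0 ≤ c j := fun j => hgrad 0 h0state j
  have hxle : ∀ t, φ (I t) ≤ ∑ j, c j * I t j := by
    intro t
    have hstate : I t ∈ stateSet (m+1) N :=
      ⟨(inv t).2.1, by linarith [(inv t).2.2, (inv t).1]⟩
    have h1 := sp_concave_lin_bound (m+1) (stateSet (m+1) N) φ hC hφ0 hconc h0state
      (I t) hstate
    have h2 := sp_fderiv_decomp (m+1) (fderiv ℝ φ 0) (I t)
    rw [h2] at h1
    calc φ (I t) ≤ ∑ j, I t j * c j := h1
      _ = ∑ j, c j * I t j := Finset.sum_congr rfl fun j _ => mul_comm _ _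
  have hx0 : ∀ t, 0 ≤ φ (I t) := by
    intro t
    exact (hrange (I t) ⟨(inv t).2.1, by linarith [(inv t).2.2, (inv t).1]⟩).1
  have hxsum : Summable (fun t => φ (I t)) := by
    refine Summable.of_nonneg_of_le hx0 hxle ?_
    exact summable_sum fun j _ => (hsummI j).mul_left (c j)
  -- choose T with small tail
  have htail : Tendsto (fun i => ∑' k, φ (I (k + i))) atTop (𝓝 0) := by
    have := tendsto_sum_nat_add (f := fun t => φ (I t))
    simpa using this
  have hev : ∀ᶠ i in atTop, ∑' k, φ (I (k + i)) ≤ 1/2 := by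
    have := htail.eventually (eventually_le_nhds (by norm_num : (0:ℝ) < 1/2))
    exact this
  obtain ⟨T, hT⟩ := hev.exists
  have htails : Summable (fun k => φ (I (k + T))) := (summable_nat_add_iff T).2 hxsum
  -- Weierstrass product lower bound
  have hlow : ∀ k, S T * (1 - ∑ i ∈ Finset.range k, φ (I (i + T))) ≤ S (T + k) := by
    intro k
    induction k with
    | zero => simp
    | succ k ihk =>
      have hxk0 : 0 ≤ φ (I (T + k)) := hx0 _
      have hxk1 : φ (I (T + k)) < 1 := by
        have := hrange (I (T+k)) ⟨(inv (T+k)).2.1, by linarith [(inv (T+k)).2.2, (inv (T+k)).1]⟩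
        exact this.2
      have hσ0 : 0 ≤ ∑ i ∈ Finset.range k, φ (I (i + T)) :=
        Finset.sum_nonneg fun i _ => hx0 _
      rw [Finset.sum_range_succ, show T + (k+1) = (T + k) + 1 by ring, hSrec (T+k)]
      have hST : 0 ≤ S T := (inv T).1.le
      have : S T * (1 - (∑ i ∈ Finset.range k, φ (I (i + T)) + φ (I (k + T))))
          ≤ (1 - φ (I (T+k))) * (S T * (1 - ∑ i ∈ Finset.range k, φ (I (i + T)))) := by
        rw [show k + T = T + k by ring]
        nlinarith [mul_nonneg (mul_nonneg hST hxk0) hσ0]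
      calc S T * (1 - (∑ i ∈ Finset.range k, φ (I (i + T)) + φ (I (k + T))))
          ≤ (1 - φ (I (T+k))) * (S T * (1 - ∑ i ∈ Finset.range k, φ (I (i + T)))) := this
        _ ≤ (1 - φ (I (T+k))) * S (T + k) := by
            apply mul_le_mul_of_nonneg_left ihk (by linarith)
  have hhalf : ∀ k, S T * (1/2) ≤ S (T + k) := by
    intro k
    refine le_trans ?_ (hlow k)
    apply mul_le_mul_of_nonneg_left ?_ (inv T).1.le
    have : ∑ i ∈ Finset.range k, φ (I (i + T)) ≤ ∑' i, φ (I (i + T)) :=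
      Summable.sum_le_tsum _ (fun i _ => hx0 _) htails
    linarith [hT, this]
  have hfin : S T * (1/2) ≤ Sinf := by
    refine ge_of_tendsto hSinf ?_
    filter_upwards [eventually_ge_atTop T] with t ht
    have := hhalf (t - T)
    rwa [show T + (t - T) = t by omega] at this
  have := (inv T).1
  linarith
end

section
/- Let a > 0 and B(a) = T + F(a), where T is the lower bidiagonal transition matrix with diagonal entries 1−γⱼ and subdiagonal entries γⱼ, and F(a) has first row a·r = a(r₁,…,rₙ) with r ≥ 0, rₙ > 0, and all other rows zero. Then B(a) is irreducible and primitive. -/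
/-- A nonnegative square matrix is irreducible if its directed adjacency graph is strongly
connected, i.e. for any `i, j` some power of the matrix has a positive `(i,j)` entry. -/
def Matrix.IsIrreducible' {n : ℕ} (B : Matrix (Fin n) (Fin n) ℝ) : Prop :=
  ∀ i j : Fin n, ∃ k : ℕ, 0 < (B ^ k) i j

/-- A nonnegative square matrix is primitive if some power of it is entrywise positive. -/
def Matrix.IsPrimitive' {n : ℕ} (B : Matrix (Fin n) (Fin n) ℝ) : Prop :=
  ∃ k : ℕ, ∀ i j : Fin n, 0 < (B ^ k) i j

/-- `B(a) = T + F(a)` (transition part `T` lower bidiagonal with diagonal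
`1−γⱼ` and subdiagonal `γⱼ`; fertility part `F(a)` with first row `a·r`, `r ≥ 0`, `rₙ > 0`,
and zeros elsewhere) is irreducible and primitive. -/
theorem B_irreducible_primitive
    (n : ℕ) (hn : 0 < n) (a : ℝ) (ha : 0 < a)
    (γ r : Fin n → ℝ) (hγ : ∀ j, γ j ∈ Set.Ioo (0 : ℝ) 1)
    (hr : ∀ j, 0 ≤ r j) (hrn : 0 < r ⟨n - 1, Nat.sub_lt hn Nat.one_pos⟩)
    (T F : Matrix (Fin n) (Fin n) ℝ)
    (hT : ∀ i j : Fin n, T i j =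
      if i = j then 1 - γ j else if i.val = j.val + 1 then γ j else 0)
    (hF : ∀ i j : Fin n, F i j = if i.val = 0 then a * r j else 0) :
    (T + F).IsIrreducible' ∧ (T + F).IsPrimitive' := by
  set B := T + F with hBdef
  have hBapp : ∀ i j, B i j = T i j + F i j := fun i j => rfl
  have hTnn : ∀ i j, 0 ≤ T i j := by
    intro i j; rw [hT]
    split
    · linarith [(hγ j).2]
    · split
      · linarith [(hγ j).1]
      · exact le_refl 0
  have hFnn : ∀ i j, 0 ≤ F i j := by
    intro i j; rw [hF]
    split
    · exact mul_nonneg ha.le (hr j)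
    · exact le_refl 0
  have hBnn : ∀ i j, 0 ≤ B i j := fun i j => add_nonneg (hTnn i j) (hFnn i j)
  have hpow_nn : ∀ (k : ℕ) (i j : Fin n), 0 ≤ (B ^ k) i j := by
    intro k
    induction k with
    | zero =>
      intro i j
      simp only [pow_zero, Matrix.one_apply]
      split <;> norm_num
    | succ k ih =>
      intro i j
      rw [pow_succ, Matrix.mul_apply]
      exact Finset.sum_nonneg fun l _ => mul_nonneg (ih i l) (hBnn l j)
  have hdiag : ∀ i, 0 < B i i := by
    intro i
    have h1 : 0 < T i i := by
      rw [hT, if_pos rfl]; linarith [(hγ i).2]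
    have := hFnn i i
    rw [hBapp]; linarith
  have hmulpos : ∀ (k m : ℕ) (i l j : Fin n),
      0 < (B ^ k) i l → 0 < (B ^ m) l j → 0 < (B ^ (k + m)) i j := by
    intro k m i l j h1 h2
    rw [pow_add, Matrix.mul_apply]
    refine Finset.sum_pos' (fun x _ => mul_nonneg (hpow_nn _ _ _) (hpow_nn _ _ _)) ?_
    exact ⟨l, Finset.mem_univ l, mul_pos h1 h2⟩
  have hmono : ∀ (k m : ℕ) (i j : Fin n), k ≤ m → 0 < (B ^ k) i j → 0 < (B ^ m) i j := by
    intro k m i j hkm h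
    induction m, hkm using Nat.le_induction with
    | base => exact h
    | succ m hm ih =>
      have := hmulpos m 1 i j j ih (by simpa [pow_one] using hdiag j)
      simpa using this
  have hsub : ∀ i j : Fin n, i.val = j.val + 1 → 0 < B i j := by
    intro i j hij
    have hne : i ≠ j := by
      intro h; rw [h] at hij; omega
    have hT' : T i j = γ j := by rw [hT, if_neg hne, if_pos hij]
    have hF' : F i j = 0 := by rw [hF, if_neg (by omega)]
    rw [hBapp, hT', hF']
    linarith [(hγ j).1]
  have htop : 0 < B ⟨0, hn⟩ ⟨n - 1, Nat.sub_lt hn Nat.one_pos⟩ := by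
    have hF' : F ⟨0, hn⟩ ⟨n - 1, Nat.sub_lt hn Nat.one_pos⟩
        = a * r ⟨n - 1, Nat.sub_lt hn Nat.one_pos⟩ := by
      rw [hF]; simp
    have := hTnn ⟨0, hn⟩ ⟨n - 1, Nat.sub_lt hn Nat.one_pos⟩
    have hpos := mul_pos ha hrn
    rw [hBapp, hF']
    linarith
  have hdown : ∀ (d : ℕ) (j : Fin n) (h : j.val + d < n),
      0 < (B ^ d) ⟨j.val + d, h⟩ j := by
    intro d
    induction d with
    | zero =>
      intro j h
      have : (⟨j.val + 0, h⟩ : Fin n) = j := Fin.ext (by simp)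
      rw [this, pow_zero, Matrix.one_apply_eq]
      norm_num
    | succ d ih =>
      intro j h
      have h' : j.val + d < n := by omega
      have e1 : 0 < B ⟨j.val + (d + 1), h⟩ ⟨j.val + d, h'⟩ :=
        hsub _ _ (by simp only [Fin.val_mk]; omega)
      have := hmulpos 1 d ⟨j.val + (d + 1), h⟩ ⟨j.val + d, h'⟩ j
        (by simpa [pow_one] using e1) (ih j h')
      simpa [Nat.add_comm] using this
  have hkey : ∀ i j : Fin n, 0 < (B ^ (i.val + 1 + (n - 1 - j.val))) i j := by
    intro i j
    have p1 : 0 < (B ^ i.val) i ⟨0, hn⟩ := by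
      have h0 : (⟨0, hn⟩ : Fin n).val + i.val < n := by simp
      have := hdown i.val ⟨0, hn⟩ h0
      have he : (⟨(⟨0, hn⟩ : Fin n).val + i.val, h0⟩ : Fin n) = i := Fin.ext (by simp)
      rwa [he] at this
    have p2 : 0 < (B ^ 1) ⟨0, hn⟩ ⟨n - 1, Nat.sub_lt hn Nat.one_pos⟩ := by
      simpa [pow_one] using htop
    have p3 : 0 < (B ^ (n - 1 - j.val)) ⟨n - 1, Nat.sub_lt hn Nat.one_pos⟩ j := by
      have hj : j.val ≤ n - 1 := by have := j.isLt; omega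
      have h0 : j.val + (n - 1 - j.val) < n := by omega
      have := hdown (n - 1 - j.val) j h0
      have he : (⟨j.val + (n - 1 - j.val), h0⟩ : Fin n)
          = ⟨n - 1, Nat.sub_lt hn Nat.one_pos⟩ := Fin.ext (by simp; omega)
      rwa [he] at this
    exact hmulpos (i.val + 1) (n - 1 - j.val) i ⟨n - 1, Nat.sub_lt hn Nat.one_pos⟩ j
      (hmulpos i.val 1 i ⟨0, hn⟩ ⟨n - 1, Nat.sub_lt hn Nat.one_pos⟩ p1 p2) p3
  constructor
  · intro i j; exact ⟨_, hkey i j⟩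
  · refine ⟨2 * n, fun i j => hmono _ _ i j ?_ (hkey i j)⟩
    have := i.isLt; have := j.isLt; omega
end

section
/- With B(a) = T + F(a) as above, the net reproductive value ρ(F(a)(I − T)⁻¹) equals a·δ where δ = ∑_{j=1}^n rⱼ/γⱼ. Consequently, sign(ρ(B(a)) − 1) = sign(a − 1/δ). -/
/-- The spectral radius of a real matrix: the supremum of the moduli of its complex
eigenvalues. -/
noncomputable def specRad {n : ℕ} (M : Matrix (Fin n) (Fin n) ℝ) : ℝ :=
  sSup ((fun z : ℂ => ‖z‖) '' spectrum ℂ (M.map (fun x => (x : ℂ))))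

open Matrix Finset


noncomputable def Sm {m : ℕ} (γ : Fin (m+1) → ℝ) : Matrix (Fin (m+1)) (Fin (m+1)) ℝ :=
  Matrix.of (fun i j => if j ≤ i then 1 / γ i else 0)

lemma oneSubT_mul_S {m : ℕ} (γ : Fin (m+1) → ℝ) (hγ : ∀ j, γ j ∈ Set.Ioo (0:ℝ) 1)
    (T : Matrix (Fin (m+1)) (Fin (m+1)) ℝ)
    (hT : ∀ i j : Fin (m+1), T i j =
      if i = j then 1 - γ j else if i.val = j.val + 1 then γ j else 0) :
    (1 - T) * Sm γ = 1 := by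
  have hγ0 : ∀ j, γ j ≠ 0 := fun j => (hγ j).1.ne'
  ext i j
  rw [Matrix.mul_apply]
  rcases Fin.eq_zero_or_eq_succ i with hi | ⟨i', rfl⟩
  · subst hi
    have hterm : ∀ k : Fin (m+1), (1 - T) 0 k * Sm γ k j =
        if k = 0 then γ 0 * Sm γ 0 j else 0 := by
      intro k
      simp only [Matrix.sub_apply, Matrix.one_apply, hT]
      by_cases hk : k = 0
      · subst hk; norm_num
      · have h1 : ¬ ((0:Fin (m+1)) = k) := fun h => hk h.symm
        have h2 : ¬ ((0:Fin (m+1)).val = k.val + 1) := by simp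
        simp [h1, h2, hk]
    rw [Finset.sum_congr rfl (fun k _ => hterm k),
      Finset.sum_ite_eq' Finset.univ (0 : Fin (m+1)) (fun _ => γ 0 * Sm γ 0 j)]
    simp only [Finset.mem_univ, if_true, Sm, Matrix.of_apply, Matrix.one_apply]
    by_cases hj : j = 0
    · subst hj
      simp [le_refl, mul_one_div, div_self (hγ0 0), mul_inv_cancel₀ (hγ0 0)]
    · have : ¬ (j ≤ 0) := by rw [Fin.le_zero_iff]; exact hj
      simp [this, hj, (Ne.symm hj)]
  · have hterm : ∀ k : Fin (m+1), (1 - T) i'.succ k * Sm γ k j =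
        (if k = i'.succ then γ i'.succ * Sm γ i'.succ j else 0) +
        (if k = i'.castSucc then -(γ i'.castSucc * Sm γ i'.castSucc j) else 0) := by
      intro k
      simp only [Matrix.sub_apply, Matrix.one_apply, hT]
      by_cases hk1 : k = i'.succ
      · subst hk1
        have h2 : ¬ (i'.succ.val = i'.succ.val + 1) := by omega
        have h3 : ¬ (i'.succ = i'.castSucc) := by
          rw [Fin.ext_iff]; simp only [Fin.val_succ, Fin.coe_castSucc]; omega
        simp [h2, h3]
      · by_cases hk2 : k = i'.castSucc
        · subst hk2
          have h1 : ¬ (i'.succ = i'.castSucc) := by rw [Fin.ext_iff]; simp only [Fin.val_succ, Fin.coe_castSucc]; omega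
          have h2 : i'.succ.val = i'.castSucc.val + 1 := by simp
          simp only [h1, h2, hk1, if_false, if_true, if_neg, if_pos]
          ring
        · have h1 : ¬ (i'.succ = k) := fun h => hk1 h.symm
          have h2 : ¬ (i'.succ.val = k.val + 1) := by
            intro h
            apply hk2
            rw [Fin.ext_iff, Fin.coe_castSucc]
            simp only [Fin.val_succ] at h
            omega
          have h3 : ¬ (i'.val = k.val) := by
            intro h
            apply hk2
            rw [Fin.ext_iff, Fin.coe_castSucc]
            omega
          simp [h1, h2, hk1, hk2, h3]
    rw [Finset.sum_congr rfl (fun k _ => hterm k), Finset.sum_add_distrib,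
      Finset.sum_ite_eq' Finset.univ (i'.succ) (fun _ => γ i'.succ * Sm γ i'.succ j),
      Finset.sum_ite_eq' Finset.univ (i'.castSucc)
        (fun _ => -(γ i'.castSucc * Sm γ i'.castSucc j))]
    simp only [Finset.mem_univ, if_true, Sm, Matrix.of_apply, Matrix.one_apply]
    have hcs : i'.castSucc.val = i'.val := by simp
    have hs : i'.succ.val = i'.val + 1 := by simp
    by_cases hj : j = i'.succ
    · subst hj
      have h1 : i'.succ ≤ i'.succ := le_refl _
      have h2 : ¬ (i'.succ ≤ i'.castSucc) := by rw [Fin.le_def]; omega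
      simp [h1, h2, mul_one_div, div_self (hγ0 i'.succ), mul_inv_cancel₀ (hγ0 i'.succ)]
    · have hjv : j.val ≠ i'.val + 1 := by
        intro h; apply hj; rw [Fin.ext_iff]; omega
      by_cases hle : j ≤ i'.castSucc
      · have hle2 : j ≤ i'.succ := by rw [Fin.le_def] at hle ⊢; omega
        simp only [hle, hle2, if_true, if_pos, Ne.symm hj, hj, if_false, Matrix.one_apply_ne',
          Matrix.one_apply_ne, ne_eq, not_false_iff, mul_one_div]
        rw [div_self (hγ0 i'.succ), div_self (hγ0 i'.castSucc)]
        ring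
      · have hle2 : ¬ (j ≤ i'.succ) := by rw [Fin.le_def] at hle ⊢; omega
        simp [hle, hle2, Ne.symm hj, hj]


lemma FS_row (m : ℕ) (a : ℝ) (γ r : Fin (m+1) → ℝ)
    (F : Matrix (Fin (m+1)) (Fin (m+1)) ℝ)
    (hF : ∀ i j : Fin (m+1), F i j = if i.val = 0 then a * r j else 0) :
    (∀ i j, i ≠ 0 → (F * Sm γ) i j = 0) ∧ (F * Sm γ) 0 0 = a * ∑ k, r k / γ k := by
  constructor
  · intro i j hi
    rw [Matrix.mul_apply]
    apply Finset.sum_eq_zero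
    intro k _
    have : i.val ≠ 0 := fun h => hi (Fin.ext h)
    rw [hF, if_neg this, zero_mul]
  · rw [Matrix.mul_apply, Finset.mul_sum]
    apply Finset.sum_congr rfl
    intro k _
    rw [hF]
    simp only [Fin.val_zero, if_true, Sm, Matrix.of_apply, Fin.zero_le, if_pos]
    rw [mul_one_div, mul_div_assoc]


lemma algmap_mulVec {n : ℕ} (μ : ℂ) (v : Fin n → ℂ) :
    (algebraMap ℂ (Matrix (Fin n) (Fin n) ℂ)) μ *ᵥ v = μ • v := by
  rw [Algebra.algebraMap_eq_smul_one, Matrix.smul_mulVec, Matrix.one_mulVec]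

lemma mem_spectrum_iff_eig {n : ℕ} (M : Matrix (Fin n) (Fin n) ℂ) (μ : ℂ) :
    μ ∈ spectrum ℂ M ↔ ∃ v : Fin n → ℂ, v ≠ 0 ∧ M.mulVec v = μ • v := by
  rw [spectrum.mem_iff, Matrix.isUnit_iff_isUnit_det, isUnit_iff_ne_zero, not_not,
    ← Matrix.exists_mulVec_eq_zero_iff]
  constructor
  · rintro ⟨v, hv, h⟩
    refine ⟨v, hv, ?_⟩
    rw [Matrix.sub_mulVec, algmap_mulVec, sub_eq_zero] at h
    exact h.symm
  · rintro ⟨v, hv, h⟩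
    exact ⟨v, hv, by rw [Matrix.sub_mulVec, algmap_mulVec, h, sub_self]⟩

lemma specRad_row0 {m : ℕ} (N : Matrix (Fin (m+1)) (Fin (m+1)) ℝ)
    (h : ∀ i j, i ≠ 0 → N i j = 0) (h0 : 0 < N 0 0) : specRad N = N 0 0 := by
  set N' : Matrix (Fin (m+1)) (Fin (m+1)) ℂ := N.map (fun x => (x : ℂ)) with hN'
  have key : IsGreatest ((fun z : ℂ => ‖z‖) '' spectrum ℂ N') (N 0 0) := by
    constructor
    · refine ⟨(N 0 0 : ℂ), ?_, by simp [abs_of_pos h0]⟩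
      rw [mem_spectrum_iff_eig]
      refine ⟨Pi.single 0 1, ?_, ?_⟩
      · intro hz
        have := congrFun hz 0
        simp [Pi.single_apply] at this
      · funext i
        simp only [Matrix.mulVec_single, Pi.smul_apply, Pi.single_apply]
        by_cases hi : i = 0
        · subst hi; simp [hN', Matrix.map_apply]
        · simp [hN', Matrix.map_apply, h i 0 hi, hi]
    · rintro x ⟨μ, hμ, rfl⟩
      rw [mem_spectrum_iff_eig] at hμ
      obtain ⟨v, hv, hev⟩ := hμ
      have hzero : ∀ i : Fin (m+1), i ≠ 0 → μ * v i = 0 := by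
        intro i hi
        have := congrFun hev i
        simp only [Matrix.mulVec, dotProduct, Pi.smul_apply, smul_eq_mul] at this
        rw [← this]
        rw [Finset.sum_eq_zero]
        intro k _
        simp [hN', Matrix.map_apply, h i k hi]
      have hrow0 : (N 0 0 : ℂ) * v 0 + ∑ k ∈ Finset.univ.erase 0, (N 0 k : ℂ) * v k = μ * v 0 := by
        have := congrFun hev 0
        simp only [Matrix.mulVec, dotProduct, Pi.smul_apply, smul_eq_mul] at this
        rw [← this, ← Finset.add_sum_erase _ _ (Finset.mem_univ 0)]
        rfl
      by_cases hμ0 : μ = 0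
      · simp [hμ0, h0.le]
      by_cases hμN : μ = (N 0 0 : ℂ)
      · rw [hμN]
        simp [Complex.norm_real, abs_of_pos h0]
      -- derive contradiction: v = 0
      exfalso
      apply hv
      have hvi : ∀ i : Fin (m+1), i ≠ 0 → v i = 0 := by
        intro i hi
        have := hzero i hi
        exact (mul_eq_zero.mp this).resolve_left hμ0
      have hv0 : v 0 = 0 := by
        have hsum : ∑ k ∈ Finset.univ.erase 0, (N 0 k : ℂ) * v k = 0 := by
          apply Finset.sum_eq_zero
          intro k hk
          rw [hvi k (Finset.mem_erase.mp hk).1, mul_zero]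
        rw [hsum, add_zero] at hrow0
        by_contra hne
        exact hμN ((mul_right_cancel₀ hne hrow0).symm)
      funext i
      by_cases hi : i = 0
      · simp [hi, hv0]
      · simp [hvi i hi]
  exact key.csSup_eq





noncomputable def gR {m : ℕ} (a : ℝ) (γ r : Fin (m+1) → ℝ) (x : ℝ) : ℝ :=
  a * ∑ j, r j * (∏ k ∈ Finset.Iio j, γ k) / ∏ k ∈ Finset.Iic j, (x - 1 + γ k)

noncomputable def gC {m : ℕ} (a : ℝ) (γ r : Fin (m+1) → ℝ) (z : ℂ) : ℂ :=
  (a:ℂ) * ∑ j, (r j : ℂ) * (∏ k ∈ Finset.Iio j, (γ k : ℂ)) /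
    ∏ k ∈ Finset.Iic j, (z - 1 + (γ k : ℂ))

lemma gC_ofReal {m : ℕ} (a : ℝ) (γ r : Fin (m+1) → ℝ) (x : ℝ) :
    gC a γ r (x : ℂ) = ((gR a γ r x : ℝ) : ℂ) := by
  rw [gR, gC]
  push_cast
  rfl

section Real
variable {m : ℕ} {a : ℝ} {γ r : Fin (m+1) → ℝ}
  (ha : 0 < a) (hγ : ∀ j, γ j ∈ Set.Ioo (0:ℝ) 1) (hr : ∀ j, 0 ≤ r j)
  (hrl : 0 < r (Fin.last m))

include hγ in
lemma denom_pos {x : ℝ} (hx : ∀ k, 1 - γ k < x) (j : Fin (m+1)) :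
    0 < ∏ k ∈ Finset.Iic j, (x - 1 + γ k) := by
  apply Finset.prod_pos
  intro k _
  linarith [hx k]

include hγ hr in
lemma term_nonneg {x : ℝ} (hx : ∀ k, 1 - γ k < x) (j : Fin (m+1)) :
    0 ≤ r j * (∏ k ∈ Finset.Iio j, γ k) / ∏ k ∈ Finset.Iic j, (x - 1 + γ k) := by
  apply div_nonneg
  · exact mul_nonneg (hr j) (Finset.prod_nonneg fun k _ => (hγ k).1.le)
  · exact (denom_pos hγ hx j).le

include ha hγ hr hrl in
lemma gR_strictAnti {x y : ℝ} (hx : ∀ k, 1 - γ k < x) (hxy : x < y) :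
    gR a γ r y < gR a γ r x := by
  rw [gR, gR]
  apply mul_lt_mul_of_pos_left _ ha
  have hy : ∀ k, 1 - γ k < y := fun k => lt_trans (hx k) hxy
  apply Finset.sum_lt_sum
  · intro j _
    apply div_le_div_of_nonneg_left
      (mul_nonneg (hr j) (Finset.prod_nonneg fun k _ => (hγ k).1.le))
      (denom_pos hγ hx j)
    apply Finset.prod_le_prod
    · intro k _; linarith [hx k]
    · intro k _; linarith [hxy]
  · refine ⟨Fin.last m, Finset.mem_univ _, ?_⟩
    apply div_lt_div_of_pos_left
    · exact mul_pos hrl (Finset.prod_pos fun k _ => (hγ k).1)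
    · exact denom_pos hγ hx _
    · apply Finset.prod_lt_prod_of_nonempty
      · intro k _; linarith [hx k]
      · intro k _; linarith [hxy]
      · exact ⟨Fin.last m, Finset.mem_Iic.mpr le_rfl⟩

include hγ in
lemma gR_one (hδpos : True) : gR a γ r 1 = a * ∑ j, r j / γ j := by
  rw [gR]
  congr 1
  apply Finset.sum_congr rfl
  intro j _
  have h1 : ∀ k : Fin (m+1), (1:ℝ) - 1 + γ k = γ k := fun k => by ring
  simp_rw [h1]
  have h2 : Finset.Iic j = insert j (Finset.Iio j) := by
    ext k
    simp [Finset.mem_Iic, Finset.mem_insert, Finset.mem_Iio, le_iff_lt_or_eq,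
      or_comm]
  rw [h2, Finset.prod_insert (by simp)]
  have hP : (0:ℝ) < ∏ k ∈ Finset.Iio j, γ k := Finset.prod_pos fun k _ => (hγ k).1
  rw [mul_comm (γ j), mul_div_assoc, div_mul_eq_div_div, div_self hP.ne', mul_one_div]
end Real



section Real2
variable {m : ℕ} {a : ℝ} {γ r : Fin (m+1) → ℝ}
  (ha : 0 < a) (hγ : ∀ j, γ j ∈ Set.Ioo (0:ℝ) 1) (hr : ∀ j, 0 ≤ r j)
  (hrl : 0 < r (Fin.last m))

include ha hγ hr hrl in
lemma exists_lam : ∃ lam : ℝ, (∀ k, 1 - γ k < lam) ∧ gR a γ r lam = 1 := by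
  obtain ⟨k₀, -, hk₀⟩ := Finset.exists_min_image Finset.univ γ ⟨0, Finset.mem_univ 0⟩
  simp only [Finset.mem_univ, forall_true_left] at hk₀
  have hk₀' : ∀ k, γ k₀ ≤ γ k := fun k => hk₀ k
  set mx : ℝ := 1 - γ k₀ with hmx
  have hmx1 : mx < 1 := by have := (hγ k₀).1; simp [hmx]; linarith
  have hmx0 : 0 < mx := by have := (hγ k₀).2; simp [hmx]; linarith
  have hmxk : ∀ k, 1 - γ k ≤ mx := fun k => by have := hk₀' k; simp [hmx]; linarith
  set c₀ : ℝ := a * (r (Fin.last m) * ∏ k ∈ Finset.Iio (Fin.last m), γ k) with hc₀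
  have hc₀pos : 0 < c₀ :=
    mul_pos ha (mul_pos hrl (Finset.prod_pos fun k _ => (hγ k).1))
  set ε : ℝ := min 1 (c₀ / 2 ^ m) with hε
  have hεpos : 0 < ε := lt_min one_pos (div_pos hc₀pos (by positivity))
  have hε1 : ε ≤ 1 := min_le_left _ _
  have hεc : ε ≤ c₀ / 2 ^ m := min_le_right _ _
  set x₁ : ℝ := mx + ε with hx₁
  set C : ℝ := a * ∑ j, r j * ∏ k ∈ Finset.Iio j, γ k with hC
  have hCpos : 0 ≤ C := by
    apply mul_nonneg ha.le
    apply Finset.sum_nonneg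
    intro j _
    exact mul_nonneg (hr j) (Finset.prod_nonneg fun k _ => (hγ k).1.le)
  set x₂ : ℝ := mx + 1 + C with hx₂
  have hx12 : x₁ ≤ x₂ := by simp [hx₁, hx₂]; linarith
  have hgt : ∀ x : ℝ, x₁ ≤ x → ∀ k, 1 - γ k < x := by
    intro x hx k
    calc 1 - γ k ≤ mx := hmxk k
    _ < x₁ := by simp only [hx₁]; linarith
    _ ≤ x := hx
  -- g x₁ ≥ 1
  have hg1 : 1 ≤ gR a γ r x₁ := by
    have hIic : Finset.Iic (Fin.last m) = Finset.univ := by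
      ext k; simp [Finset.mem_Iic, Fin.le_last]
    have hprod_le : ∏ k ∈ Finset.Iic (Fin.last m), (x₁ - 1 + γ k) ≤ ε * 2 ^ m := by
      rw [hIic, ← Finset.mul_prod_erase Finset.univ _ (Finset.mem_univ k₀)]
      have h1 : x₁ - 1 + γ k₀ = ε := by simp [hx₁, hmx]; ring
      rw [h1]
      apply mul_le_mul_of_nonneg_left _ hεpos.le
      calc ∏ k ∈ Finset.univ.erase k₀, (x₁ - 1 + γ k)
          ≤ ∏ k ∈ Finset.univ.erase k₀, 2 := by
            apply Finset.prod_le_prod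
            · intro k _; linarith [hgt x₁ le_rfl k]
            · intro k _
              have := (hγ k).2
              have hx1le : x₁ ≤ 2 := by simp only [hx₁]; linarith
              linarith
        _ = 2 ^ (Finset.univ.erase k₀).card := by rw [Finset.prod_const]
        _ = 2 ^ m := by
            rw [Finset.card_erase_of_mem (Finset.mem_univ k₀)]
            simp
    have hdpos : 0 < ∏ k ∈ Finset.Iic (Fin.last m), (x₁ - 1 + γ k) := by
      apply Finset.prod_pos; intro k _; linarith [hgt x₁ le_rfl k]
    have hterm : c₀ / (ε * 2 ^ m) ≤
        a * (r (Fin.last m) * (∏ k ∈ Finset.Iio (Fin.last m), γ k) /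
          ∏ k ∈ Finset.Iic (Fin.last m), (x₁ - 1 + γ k)) := by
      rw [hc₀, mul_div_assoc]
      apply mul_le_mul_of_nonneg_left _ ha.le
      exact div_le_div_of_nonneg_left
        (mul_nonneg (hr _) (Finset.prod_nonneg fun k _ => (hγ k).1.le)) hdpos hprod_le
    have h1le : (1:ℝ) ≤ c₀ / (ε * 2 ^ m) := by
      rw [le_div_iff₀ (by positivity)]
      calc 1 * (ε * 2 ^ m) = ε * 2 ^ m := by ring
      _ ≤ c₀ / 2 ^ m * 2 ^ m := by
          apply mul_le_mul_of_nonneg_right hεc (by positivity)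
      _ = c₀ := by field_simp
    calc (1:ℝ) ≤ c₀ / (ε * 2 ^ m) := h1le
    _ ≤ a * (r (Fin.last m) * (∏ k ∈ Finset.Iio (Fin.last m), γ k) /
          ∏ k ∈ Finset.Iic (Fin.last m), (x₁ - 1 + γ k)) := hterm
    _ ≤ gR a γ r x₁ := by
        rw [gR]
        apply mul_le_mul_of_nonneg_left _ ha.le
        apply Finset.single_le_sum (f := fun j =>
          r j * (∏ k ∈ Finset.Iio j, γ k) / ∏ k ∈ Finset.Iic j, (x₁ - 1 + γ k))
          _ (Finset.mem_univ (Fin.last m))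
        intro j _
        apply div_nonneg (mul_nonneg (hr j) (Finset.prod_nonneg fun k _ => (hγ k).1.le))
        · apply le_of_lt
          apply Finset.prod_pos; intro k _; linarith [hgt x₁ le_rfl k]
  -- g x₂ ≤ 1
  have hg2 : gR a γ r x₂ < 1 := by
    have hd : ∀ j : Fin (m+1),
        r j * (∏ k ∈ Finset.Iio j, γ k) / ∏ k ∈ Finset.Iic j, (x₂ - 1 + γ k)
          ≤ r j * (∏ k ∈ Finset.Iio j, γ k) / (1 + C) := by
      intro j
      have h1 : (1:ℝ) + C ≤ ∏ k ∈ Finset.Iic j, (x₂ - 1 + γ k) := by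
        calc (1:ℝ) + C = x₂ - mx := by simp only [hx₂]; ring
        _ ≤ x₂ - 1 + γ j := by have := hmxk j; linarith
        _ ≤ ∏ k ∈ Finset.Iic j, (x₂ - 1 + γ k) := by
            have hins : Finset.Iic j = insert j (Finset.Iio j) := by
              ext k
              simp [Finset.mem_Iic, Finset.mem_insert, Finset.mem_Iio,
                le_iff_lt_or_eq, or_comm]
            rw [hins, Finset.prod_insert (by simp)]
            have hone : (1:ℝ) ≤ ∏ k ∈ Finset.Iio j, (x₂ - 1 + γ k) := by
              have hle : ∏ k ∈ Finset.Iio j, (1:ℝ) ≤ ∏ k ∈ Finset.Iio j, (x₂ - 1 + γ k) := by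
                apply Finset.prod_le_prod (fun k _ => zero_le_one)
                intro k _
                have := hmxk k
                have hC2 : (1:ℝ) + C ≤ x₂ - 1 + γ k := by simp only [hx₂]; linarith
                linarith
              simpa using hle
            have hfac : (0:ℝ) ≤ x₂ - 1 + γ j := by
              have := hmxk j
              have : (1:ℝ) + C ≤ x₂ - 1 + γ j := by simp only [hx₂]; linarith
              linarith
            calc x₂ - 1 + γ j = (x₂ - 1 + γ j) * 1 := by ring
            _ ≤ (x₂ - 1 + γ j) * ∏ k ∈ Finset.Iio j, (x₂ - 1 + γ k) :=
              mul_le_mul_of_nonneg_left hone hfac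
      exact div_le_div_of_nonneg_left
        (mul_nonneg (hr j) (Finset.prod_nonneg fun k _ => (hγ k).1.le))
        (by positivity) h1
    calc gR a γ r x₂ ≤ a * ∑ j, r j * (∏ k ∈ Finset.Iio j, γ k) / (1 + C) := by
          rw [gR]
          apply mul_le_mul_of_nonneg_left _ ha.le
          exact Finset.sum_le_sum fun j _ => hd j
    _ = C / (1 + C) := by
        rw [hC, ← Finset.sum_div, mul_div_assoc]
    _ < 1 := by
        rw [div_lt_one (by linarith)]
        linarith
  -- continuity
  have hcont : ContinuousOn (gR a γ r) (Set.Icc x₁ x₂) := by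
    apply ContinuousOn.mul continuousOn_const
    apply continuousOn_finset_sum
    intro j _
    apply ContinuousOn.div continuousOn_const
    · apply Continuous.continuousOn
      apply continuous_finset_prod
      intro k _
      continuity
    · intro x hx
      have : 0 < ∏ k ∈ Finset.Iic j, (x - 1 + γ k) := by
        apply Finset.prod_pos; intro k _; linarith [hgt x hx.1 k]
      exact this.ne'
  have h1mem : (1:ℝ) ∈ Set.Icc (gR a γ r x₂) (gR a γ r x₁) := ⟨hg2.le, hg1⟩
  obtain ⟨lam, hlam, hglam⟩ := intermediate_value_Icc' hx12 hcont h1mem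
  exact ⟨lam, fun k => hgt lam hlam.1 k, hglam⟩
end Real2



lemma abs_gC_le {m : ℕ} {a : ℝ} {γ r : Fin (m+1) → ℝ}
    (ha : 0 < a) (hγ : ∀ j, γ j ∈ Set.Ioo (0:ℝ) 1) (hr : ∀ j, 0 ≤ r j)
    (μ : ℂ) (h : ∀ k, 1 - γ k < ‖μ‖) :
    ‖gC a γ r μ‖ ≤ gR a γ r (‖μ‖) := by
  have habs : ∀ k : Fin (m+1),
      ‖μ‖ - 1 + γ k ≤ ‖μ - 1 + (γ k : ℂ)‖ := by
    intro k
    have h1 : μ - 1 + (γ k : ℂ) = μ - ((1 - γ k : ℝ) : ℂ) := by push_cast; ring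
    rw [h1]
    have h2 := norm_sub_norm_le μ ((1 - γ k : ℝ) : ℂ)
    rw [Complex.norm_real, Real.norm_eq_abs, abs_of_nonneg (by linarith [(hγ k).2] : (0:ℝ) ≤ 1 - γ k)] at h2
    linarith
  have hdpos : ∀ j : Fin (m+1),
      0 < ∏ k ∈ Finset.Iic j, (‖μ‖ - 1 + γ k) :=
    fun j => Finset.prod_pos fun k _ => by linarith [h k]
  rw [gC, gR, norm_mul, Complex.norm_real, Real.norm_eq_abs, abs_of_pos ha]
  apply mul_le_mul_of_nonneg_left _ ha.le
  calc ‖∑ j, (r j : ℂ) * (∏ k ∈ Finset.Iio j, (γ k : ℂ)) /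
        ∏ k ∈ Finset.Iic j, (μ - 1 + (γ k : ℂ))‖
      ≤ ∑ j, ‖(r j : ℂ) * (∏ k ∈ Finset.Iio j, (γ k : ℂ)) /
        ∏ k ∈ Finset.Iic j, (μ - 1 + (γ k : ℂ))‖ := norm_sum_le _ _
    _ ≤ ∑ j, r j * (∏ k ∈ Finset.Iio j, γ k) /
        ∏ k ∈ Finset.Iic j, (‖μ‖ - 1 + γ k) := by
        apply Finset.sum_le_sum
        intro j _
        rw [norm_div, norm_mul, Complex.norm_real, Real.norm_eq_abs, abs_of_nonneg (hr j), norm_prod, norm_prod]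
        have hnum : ∏ k ∈ Finset.Iio j, ‖(γ k : ℂ)‖ =
            ∏ k ∈ Finset.Iio j, γ k := by
          apply Finset.prod_congr rfl
          intro k _
          rw [Complex.norm_real, Real.norm_eq_abs, abs_of_pos (hγ k).1]
        rw [hnum]
        apply div_le_div_of_nonneg_left
          (mul_nonneg (hr j) (Finset.prod_nonneg fun k _ => (hγ k).1.le)) (hdpos j)
        apply Finset.prod_le_prod
        · intro k _; linarith [h k]
        · intro k _; exact habs k



noncomputable def cvec {m : ℕ} (γ : Fin (m+1) → ℝ) (μ : ℂ) (i : Fin (m+1)) : ℂ :=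
  (∏ k ∈ Finset.Iio i, (γ k : ℂ)) / ∏ k ∈ Finset.Ioc 0 i, (μ - 1 + (γ k : ℂ))

section CVec
variable {m : ℕ} {γ : Fin (m+1) → ℝ} {μ : ℂ} (hμ : ∀ k : Fin (m+1), μ - 1 + (γ k : ℂ) ≠ 0)

lemma cvec_zero : cvec γ μ 0 = 1 := by
  have h1 : Finset.Iio (0 : Fin (m+1)) = ∅ := by
    ext k; simp [Finset.mem_Iio, Fin.le_zero_iff]
  rw [cvec, h1, Finset.Ioc_self]
  simp

include hμ in
lemma cvec_rec (i : Fin m) :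
    (μ - 1 + (γ i.succ : ℂ)) * cvec γ μ i.succ
      = (γ i.castSucc : ℂ) * cvec γ μ i.castSucc := by
  have hIio : Finset.Iio i.succ = insert i.castSucc (Finset.Iio i.castSucc) := by
    ext k
    simp only [Finset.mem_Iio, Finset.mem_insert, Fin.lt_def, Fin.ext_iff,
      Fin.val_succ, Fin.coe_castSucc]
    omega
  have hIoc : Finset.Ioc (0:Fin (m+1)) i.succ =
      insert i.succ (Finset.Ioc (0:Fin (m+1)) i.castSucc) := by
    ext k
    simp only [Finset.mem_Ioc, Finset.mem_insert, Fin.lt_def, Fin.le_def, Fin.ext_iff,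
      Fin.val_succ, Fin.coe_castSucc, Fin.val_zero]
    omega
  have hn1 : i.castSucc ∉ Finset.Iio i.castSucc := by
    simp only [Finset.mem_Iio, lt_irrefl, not_false_iff]
  have hn2 : i.succ ∉ Finset.Ioc (0:Fin (m+1)) i.castSucc := by
    simp only [Finset.mem_Ioc, not_and, not_le, Fin.lt_def, Fin.val_succ,
      Fin.coe_castSucc, Fin.val_zero]
    intro _; omega
  have hQ : (∏ k ∈ Finset.Ioc (0:Fin (m+1)) i.castSucc, (μ - 1 + (γ k : ℂ))) ≠ 0 :=
    Finset.prod_ne_zero_iff.mpr (fun k _ => hμ k)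
  rw [cvec, cvec, hIio, hIoc, Finset.prod_insert hn1, Finset.prod_insert hn2,
    mul_div_assoc', mul_div_mul_left _ _ (hμ i.succ), mul_div_assoc]

include hμ in
lemma gC_key (a : ℝ) (r : Fin (m+1) → ℝ) :
    (a:ℂ) * ∑ k, (r k : ℂ) * cvec γ μ k = (μ - 1 + (γ 0 : ℂ)) * gC a γ r μ := by
  have hterm : ∀ j : Fin (m+1),
      (r j : ℂ) * (∏ k ∈ Finset.Iio j, (γ k : ℂ)) /
          ∏ k ∈ Finset.Iic j, (μ - 1 + (γ k : ℂ))
        = (r j : ℂ) * cvec γ μ j / (μ - 1 + (γ 0 : ℂ)) := by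
    intro j
    have hsplit : Finset.Iic j = insert (0 : Fin (m+1)) (Finset.Ioc (0:Fin (m+1)) j) := by
      ext k
      simp only [Finset.mem_Iic, Finset.mem_insert, Finset.mem_Ioc, Fin.le_def,
        Fin.lt_def, Fin.ext_iff, Fin.val_zero]
      omega
    have hn : (0 : Fin (m+1)) ∉ Finset.Ioc (0:Fin (m+1)) j := by
      simp only [Finset.mem_Ioc, not_and, not_le, Fin.lt_def, Fin.val_zero]
      intro h; omega
    have hQ : (∏ k ∈ Finset.Ioc (0:Fin (m+1)) j, (μ - 1 + (γ k : ℂ))) ≠ 0 :=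
      Finset.prod_ne_zero_iff.mpr (fun k _ => hμ k)
    rw [hsplit, Finset.prod_insert hn, cvec]
    field_simp
  rw [gC, Finset.sum_congr rfl (fun j _ => hterm j), ← Finset.sum_div]
  field_simp
  rw [mul_div_cancel_right₀ _ (hμ 0)]
end CVec

section Eig
variable {m : ℕ} {a : ℝ} {γ r : Fin (m+1) → ℝ}

lemma row_succ (ha : 0 < a)
    (T F : Matrix (Fin (m+1)) (Fin (m+1)) ℝ)
    (hT : ∀ i j : Fin (m+1), T i j =
      if i = j then 1 - γ j else if i.val = j.val + 1 then γ j else 0)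
    (hF : ∀ i j : Fin (m+1), F i j = if i.val = 0 then a * r j else 0)
    (v : Fin (m+1) → ℂ) (i : Fin m) :
    (((T + F).map (fun x => (x:ℂ))) *ᵥ v) i.succ
      = (1 - (γ i.succ : ℂ)) * v i.succ + (γ i.castSucc : ℂ) * v i.castSucc := by
  have hcs : ¬ (i.succ = i.castSucc) := by
    rw [Fin.ext_iff]; simp only [Fin.val_succ, Fin.coe_castSucc]; omega
  have hterm : ∀ k : Fin (m+1), (((T + F) i.succ k : ℝ) : ℂ) * v k =
      (if k = i.succ then (1 - (γ i.succ : ℂ)) * v i.succ else 0) +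
      (if k = i.castSucc then (γ i.castSucc : ℂ) * v i.castSucc else 0) := by
    intro k
    have hFz : F i.succ k = 0 := by
      rw [hF, if_neg]; simp [Fin.val_succ]
    rw [Matrix.add_apply, hFz, add_zero, hT]
    rcases eq_or_ne k i.succ with hk1 | hk1
    · rw [hk1]
      rw [if_pos rfl, if_pos rfl, if_neg hcs]
      push_cast
      ring
    · rcases eq_or_ne k i.castSucc with hk2 | hk2
      · rw [hk2]
        have hv : (i.succ).val = (i.castSucc).val + 1 := by simp
        rw [if_neg (fun h => hcs h), if_pos hv,
          if_neg (fun h : i.castSucc = i.succ => hcs h.symm), if_pos rfl]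
        push_cast
        ring
      · have h1 : ¬ (i.succ = k) := fun h => hk1 h.symm
        have h2 : ¬ ((i.succ).val = k.val + 1) := by
          intro h
          apply hk2
          rw [Fin.ext_iff, Fin.coe_castSucc]
          simp only [Fin.val_succ] at h
          omega
        rw [if_neg h1, if_neg h2, if_neg hk1, if_neg hk2]
        simp
  rw [Matrix.mulVec, dotProduct]
  simp_rw [Matrix.map_apply]
  rw [Finset.sum_congr rfl (fun k _ => hterm k), Finset.sum_add_distrib,
    Finset.sum_ite_eq' Finset.univ i.succ, Finset.sum_ite_eq' Finset.univ i.castSucc]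
  simp

lemma row_zero (ha : 0 < a)
    (T F : Matrix (Fin (m+1)) (Fin (m+1)) ℝ)
    (hT : ∀ i j : Fin (m+1), T i j =
      if i = j then 1 - γ j else if i.val = j.val + 1 then γ j else 0)
    (hF : ∀ i j : Fin (m+1), F i j = if i.val = 0 then a * r j else 0)
    (v : Fin (m+1) → ℂ) :
    (((T + F).map (fun x => (x:ℂ))) *ᵥ v) 0
      = (1 - (γ 0 : ℂ)) * v 0 + (a:ℂ) * ∑ k, (r k : ℂ) * v k := by
  have hterm : ∀ k : Fin (m+1), (((T + F) 0 k : ℝ) : ℂ) * v k =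
      (if k = 0 then (1 - (γ 0 : ℂ)) * v 0 else 0) + (a:ℂ) * ((r k : ℂ) * v k) := by
    intro k
    rw [Matrix.add_apply, hT, hF]
    have h0 : (0:Fin (m+1)).val = 0 := rfl
    rw [if_pos h0]
    by_cases hk : k = 0
    · subst hk
      simp only [if_pos rfl]
      push_cast
      ring
    · have h1 : ¬ ((0:Fin (m+1)) = k) := fun h => hk h.symm
      have h2 : ¬ ((0:Fin (m+1)).val = k.val + 1) := by simp
      rw [if_neg h1, if_neg h2, if_neg hk]
      push_cast
      ring
  rw [Matrix.mulVec, dotProduct]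
  simp_rw [Matrix.map_apply]
  rw [Finset.sum_congr rfl (fun k _ => hterm k), Finset.sum_add_distrib,
    Finset.sum_ite_eq' Finset.univ (0 : Fin (m+1)), ← Finset.mul_sum]
  simp
end Eig

lemma eig_iff {m : ℕ} {a : ℝ} {γ r : Fin (m+1) → ℝ} (ha : 0 < a)
    (T F : Matrix (Fin (m+1)) (Fin (m+1)) ℝ)
    (hT : ∀ i j : Fin (m+1), T i j =
      if i = j then 1 - γ j else if i.val = j.val + 1 then γ j else 0)
    (hF : ∀ i j : Fin (m+1), F i j = if i.val = 0 then a * r j else 0)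
    (μ : ℂ) (hμ : ∀ k : Fin (m+1), μ - 1 + (γ k : ℂ) ≠ 0) :
    μ ∈ spectrum ℂ ((T + F).map (fun x => (x:ℂ))) ↔ gC a γ r μ = 1 := by
  rw [mem_spectrum_iff_eig]
  constructor
  · rintro ⟨v, hv, hev⟩
    have hs : ∀ i : Fin m,
        (μ - 1 + (γ i.succ : ℂ)) * v i.succ = (γ i.castSucc : ℂ) * v i.castSucc := by
      intro i
      have h := congrFun hev i.succ
      rw [row_succ ha T F hT hF] at h
      simp only [Pi.smul_apply, smul_eq_mul] at h
      linear_combination -h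
    have hvc : ∀ i, v i = v 0 * cvec γ μ i := by
      intro i
      induction i using Fin.induction with
      | zero => rw [cvec_zero]; ring
      | succ i ih =>
        have h1 := hs i
        rw [ih] at h1
        have h2 := cvec_rec hμ i
        have h3 : (μ - 1 + (γ i.succ : ℂ)) * v i.succ
            = (μ - 1 + (γ i.succ : ℂ)) * (v 0 * cvec γ μ i.succ) := by
          linear_combination h1 - v 0 * h2
        exact mul_left_cancel₀ (hμ i.succ) h3
    have hv0 : v 0 ≠ 0 := by
      intro h
      apply hv
      funext i
      rw [hvc i, h, zero_mul]
      rfl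
    have h0 := congrFun hev 0
    rw [row_zero ha T F hT hF] at h0
    simp only [Pi.smul_apply, smul_eq_mul] at h0
    have hsum : ∑ k, (r k : ℂ) * v k = v 0 * ∑ k, (r k : ℂ) * cvec γ μ k := by
      rw [Finset.mul_sum]
      apply Finset.sum_congr rfl
      intro k _
      rw [hvc k]; ring
    rw [hsum] at h0
    have hS : (a:ℂ) * ∑ k, (r k : ℂ) * cvec γ μ k = μ - 1 + (γ 0 : ℂ) := by
      have h4 : v 0 * ((a:ℂ) * ∑ k, (r k : ℂ) * cvec γ μ k)
          = v 0 * (μ - 1 + (γ 0 : ℂ)) := by linear_combination h0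
      exact mul_left_cancel₀ hv0 h4
    have hk := gC_key hμ a r
    have h5 : (μ - 1 + (γ 0:ℂ)) * gC a γ r μ = (μ - 1 + (γ 0:ℂ)) * 1 := by
      rw [mul_one, ← hk, hS]
    exact mul_left_cancel₀ (hμ 0) h5
  · intro hgc
    refine ⟨cvec γ μ, ?_, ?_⟩
    · intro h
      have := congrFun h 0
      rw [cvec_zero] at this
      simp at this
    · funext i
      rcases Fin.eq_zero_or_eq_succ i with hi | ⟨i', rfl⟩
      · subst hi
        rw [row_zero ha T F hT hF]
        simp only [Pi.smul_apply, smul_eq_mul]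
        have hk := gC_key hμ a r
        rw [hgc, mul_one] at hk
        rw [hk, cvec_zero]
        ring
      · rw [row_succ ha T F hT hF]
        simp only [Pi.smul_apply, smul_eq_mul]
        linear_combination (-1 : ℂ) * cvec_rec hμ i'


/-- the net reproductive value `ρ(F(a)(I − T)⁻¹)` equals `a·δ`, where
`δ = ∑ⱼ rⱼ/γⱼ`; consequently `sign(ρ(B(a)) − 1) = sign(a − 1/δ)`. -/
theorem net_reproductive_value
    (n : ℕ) (hn : 0 < n) (a : ℝ) (ha : 0 < a)
    (γ r : Fin n → ℝ) (hγ : ∀ j, γ j ∈ Set.Ioo (0 : ℝ) 1)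
    (hr : ∀ j, 0 ≤ r j) (hrn : 0 < r ⟨n - 1, Nat.sub_lt hn Nat.one_pos⟩)
    (T F : Matrix (Fin n) (Fin n) ℝ)
    (hT : ∀ i j : Fin n, T i j =
      if i = j then 1 - γ j else if i.val = j.val + 1 then γ j else 0)
    (hF : ∀ i j : Fin n, F i j = if i.val = 0 then a * r j else 0)
    (δ : ℝ) (hδ : δ = ∑ j, r j / γ j) :
    specRad (F * (1 - T)⁻¹) = a * δ ∧
    Real.sign (specRad (T + F) - 1) = Real.sign (a - 1 / δ) := by
  obtain ⟨m, rfl⟩ : ∃ m, n = m + 1 := ⟨n - 1, (Nat.succ_pred_eq_of_pos hn).symm⟩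
  have hrl : 0 < r (Fin.last m) := by
    have : (⟨m + 1 - 1, Nat.sub_lt hn Nat.one_pos⟩ : Fin (m+1)) = Fin.last m := by
      apply Fin.ext; simp
    rwa [this] at hrn
  have hδpos : 0 < δ := by
    rw [hδ]
    apply Finset.sum_pos' (fun j _ => div_nonneg (hr j) (hγ j).1.le)
    exact ⟨Fin.last m, Finset.mem_univ _, div_pos hrl (hγ (Fin.last m)).1⟩
  -- Part 1
  have hinv : (1 - T)⁻¹ = Sm γ := Matrix.inv_eq_right_inv (oneSubT_mul_S γ hγ T hT)
  obtain ⟨hrows, h00⟩ := FS_row m a γ r F hF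
  have part1 : specRad (F * (1 - T)⁻¹) = a * δ := by
    rw [hinv, specRad_row0 (F * Sm γ) hrows (by rw [h00, ← hδ]; positivity), h00, hδ]
  refine ⟨part1, ?_⟩
  -- Part 2
  obtain ⟨lam, hlam, hglam⟩ := exists_lam ha hγ hr hrl
  have hlam1 : ∀ k : Fin (m+1), 1 - γ k < 1 := fun k => by linarith [(hγ k).1]
  have hlampos : 0 < lam := lt_trans (by linarith [(hγ 0).2]) (hlam 0)
  have hspec : specRad (T + F) = lam := by
    have key : IsGreatest ((fun z : ℂ => ‖z‖) '' spectrum ℂ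
        ((T + F).map (fun x => (x:ℂ)))) lam := by
      constructor
      · refine ⟨(lam : ℂ), ?_, by simp [abs_of_pos hlampos]⟩
        rw [eig_iff ha T F hT hF]
        · rw [show ((lam:ℂ) : ℂ) = ((lam : ℝ) : ℂ) from rfl, gC_ofReal, hglam]
          norm_num
        · intro k
          have h1 : (lam:ℂ) - 1 + (γ k : ℂ) = ((lam - 1 + γ k : ℝ) : ℂ) := by push_cast; ring
          rw [h1]
          simp only [ne_eq, Complex.ofReal_eq_zero]
          intro h2
          have := hlam k
          linarith
      · rintro x ⟨μ, hμmem, rfl⟩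
        by_contra hgt
        push_neg at hgt
        have habs : ∀ k : Fin (m+1), 1 - γ k < ‖μ‖ :=
          fun k => lt_trans (hlam k) hgt
        have hne : ∀ k : Fin (m+1), μ - 1 + (γ k : ℂ) ≠ 0 := by
          intro k h
          have hμeq : μ = ((1 - γ k : ℝ) : ℂ) := by
            push_cast
            linear_combination h
          rw [hμeq, Complex.norm_real, Real.norm_eq_abs,
            abs_of_nonneg (by linarith [(hγ k).2] : (0:ℝ) ≤ 1 - γ k)] at habs
          exact absurd (habs k) (lt_irrefl _)
        rw [eig_iff ha T F hT hF μ hne] at hμmem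
        have hle := abs_gC_le ha hγ hr μ habs
        rw [hμmem] at hle
        simp only [norm_one] at hle
        have hlt := gR_strictAnti ha hγ hr hrl hlam hgt
        rw [hglam] at hlt
        linarith
    exact key.csSup_eq
  rw [hspec]
  have hg1 : gR a γ r 1 = a * δ := by rw [gR_one hγ trivial, hδ]
  rcases lt_trichotomy (a * δ) 1 with hc | hc | hc
  · have hlamlt : lam < 1 := by
      rcases lt_trichotomy lam 1 with h | h | h
      · exact h
      · exfalso; rw [← h, hglam] at hg1; linarith
      · exfalso
        have := gR_strictAnti ha hγ hr hrl hlam1 h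
        rw [hglam, hg1] at this
        linarith
    have hsa : a - 1 / δ < 0 := by
      rw [sub_neg, lt_div_iff₀ hδpos]
      exact hc
    rw [Real.sign_of_neg (by linarith), Real.sign_of_neg hsa]
  · have hlameq : lam = 1 := by
      rcases lt_trichotomy lam 1 with h | h | h
      · exfalso
        have := gR_strictAnti ha hγ hr hrl hlam h
        rw [hglam, hg1] at this
        linarith
      · exact h
      · exfalso
        have := gR_strictAnti ha hγ hr hrl hlam1 h
        rw [hglam, hg1] at this
        linarith
    have hsa : a - 1 / δ = 0 := by
      have : a = 1 / δ := by
        field_simp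
        linarith [hc]
      rw [this, sub_self]
    rw [hlameq, sub_self, hsa, Real.sign_zero]
  · have hlamgt : 1 < lam := by
      rcases lt_trichotomy lam 1 with h | h | h
      · exfalso
        have := gR_strictAnti ha hγ hr hrl hlam h
        rw [hglam, hg1] at this
        linarith
      · exfalso; rw [← h, hglam] at hg1; linarith
      · exact h
    have hsa : 0 < a - 1 / δ := by
      rw [sub_pos, div_lt_iff₀ hδpos]
      exact hc
    rw [Real.sign_of_pos (by linarith), Real.sign_of_pos hsa]
end

section
/- Let v > 0 be the Perron right eigenvector of B(a) = T + F(a) with eigenvalue λ = ρ(B(a)). Then for all i < j in {1,…,n}: sign(λ − 1) = sign(γᵢvᵢ − γⱼvⱼ) = sign(a·(r·v) − γ₁v₁). -/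
private lemma sign_mul_of_pos (t s : ℝ) (hs : 0 < s) :
    Real.sign (t * s) = Real.sign t := by
  rcases lt_trichotomy t 0 with h | h | h
  · rw [Real.sign_of_neg h, Real.sign_of_neg (mul_neg_of_neg_of_pos h hs)]
  · simp [h]
  · rw [Real.sign_of_pos h, Real.sign_of_pos (mul_pos h hs)]

/-- if `v > 0` is the Perron right eigenvector of `B(a) = T + F(a)` with
eigenvalue `λ = ρ(B(a))`, then for all `i < j`,
`sign(λ−1) = sign(γᵢvᵢ − γⱼvⱼ) = sign(a(r·v) − γ₁v₁)`. -/
theorem perron_eigenvector_signs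
    (n : ℕ) (hn : 0 < n) (a lam : ℝ) (ha : 0 < a)
    (γ r v : Fin n → ℝ) (hγ : ∀ j, γ j ∈ Set.Ioo (0 : ℝ) 1)
    (hr : ∀ j, 0 ≤ r j) (hrn : 0 < r ⟨n - 1, Nat.sub_lt hn Nat.one_pos⟩)
    (B : Matrix (Fin n) (Fin n) ℝ)
    (hB : ∀ i j : Fin n, B i j =
      (if i = j then 1 - γ j else 0) + (if i.val = j.val + 1 then γ j else 0) +
        (if i.val = 0 then a * r j else 0))
    (hv : ∀ j, 0 < v j) (heig : B.mulVec v = lam • v) (hlam : lam = specRad B) :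
    ∀ i j : Fin n, i < j →
      Real.sign (lam - 1) = Real.sign (γ i * v i - γ j * v j) ∧
      Real.sign (lam - 1) =
        Real.sign (a * (∑ k, r k * v k) - γ ⟨0, hn⟩ * v ⟨0, hn⟩) := by
  set t := lam - 1 with ht
  have hrow : ∀ i : Fin n, ∑ k, B i k * v k = lam * v i := by
    intro i
    have := congrFun heig i
    simpa [Matrix.mulVec, dotProduct, Pi.smul_apply, smul_eq_mul] using this
  -- row 0
  have fact0 : a * (∑ k, r k * v k) - γ ⟨0, hn⟩ * v ⟨0, hn⟩ = t * v ⟨0, hn⟩ := by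
    set i0 : Fin n := ⟨0, hn⟩ with hi0
    have h := hrow i0
    have hterm : ∀ k : Fin n, B i0 k * v k =
        (if k = i0 then (1 - γ i0) * v i0 else 0) + a * r k * v k := by
      intro k
      rw [hB]
      by_cases hk : k = i0
      · subst hk; simp [hi0]; ring
      · have hne : i0 ≠ k := fun h' => hk h'.symm
        have : ¬ (i0.val = k.val + 1) := by simp [hi0]
        simp [hne, hk, this, hi0, add_mul, show (⟨0, hn⟩ : Fin n) ≠ k from hne,
          show ¬ k = (⟨0, hn⟩ : Fin n) from hk]
    rw [Finset.sum_congr rfl (fun k _ => hterm k)] at h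
    rw [Finset.sum_add_distrib, Finset.sum_ite_eq' Finset.univ i0] at h
    simp only [Finset.mem_univ, if_true] at h
    have hs : ∑ k, a * r k * v k = a * ∑ k, r k * v k := by
      rw [Finset.mul_sum]
      exact Finset.sum_congr rfl (fun k _ => by ring)
    rw [hs] at h
    have hexp : t * v i0 = lam * v i0 - v i0 := by rw [ht]; ring
    rw [hexp]
    linarith [h]
  -- consecutive rows
  have factstep : ∀ i j : Fin n, j.val = i.val + 1 →
      γ i * v i - γ j * v j = t * v j := by
    intro i j hij
    have h := hrow j
    have hji : j ≠ i := by intro h'; rw [h'] at hij; omega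
    have hterm : ∀ k : Fin n, B j k * v k =
        (if k = j then (1 - γ j) * v j else 0) + (if k = i then γ i * v i else 0) := by
      intro k
      rw [hB]
      have hj0 : ¬ (j.val = 0) := by omega
      by_cases hk : k = j
      · subst hk
        have h1 : ¬ (k.val = k.val + 1) := by omega
        have h2 : k ≠ i := hji
        simp [h1, h2, hj0]
      · by_cases hki : k = i
        · subst hki
          have hne : j ≠ k := fun h' => hk h'.symm
          simp [hne, hk, hij, hj0]
        · have hne : j ≠ k := fun h' => hk h'.symm
          have : ¬ (j.val = k.val + 1) := by
            intro h'; apply hki; apply Fin.ext; omega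
          simp [hne, hk, hki, this, hj0]
    rw [Finset.sum_congr rfl (fun k _ => hterm k)] at h
    rw [Finset.sum_add_distrib, Finset.sum_ite_eq' Finset.univ j,
      Finset.sum_ite_eq' Finset.univ i] at h
    simp only [Finset.mem_univ, if_true] at h
    have hexp : t * v j = lam * v j - v j := by rw [ht]; ring
    rw [hexp]
    linarith [h]
  -- telescoping
  have tele : ∀ d : ℕ, ∀ i j : Fin n, j.val = i.val + d + 1 →
      ∃ S : ℝ, 0 < S ∧ γ i * v i - γ j * v j = t * S := by
    intro d
    induction d with
    | zero =>
      intro i j hij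
      exact ⟨v j, hv j, factstep i j (by omega)⟩
    | succ d ih =>
      intro i j hij
      have hm : i.val + d + 1 < n := by omega
      set m : Fin n := ⟨i.val + d + 1, hm⟩ with hmdef
      obtain ⟨S, hS, hEq⟩ := ih i m rfl
      have hstep := factstep m j (by simp [hmdef]; omega)
      refine ⟨S + v j, add_pos hS (hv j), by rw [mul_add]; linarith⟩
  intro i j hij
  obtain ⟨S, hS, hEq⟩ := tele (j.val - i.val - 1) i j (by omega)
  constructor
  · rw [hEq, sign_mul_of_pos _ _ hS]
  · rw [fact0, sign_mul_of_pos _ _ (hv ⟨0, hn⟩)]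
end

section
/- (Final size upper bound.) Suppose R₀ = Nδ > 1, where δ = ∑ⱼ rⱼ/γⱼ. Then for every solution of the staged progression system with admissible initial condition, the limit S∞ satisfies S∞ ≤ N/R₀ = 1/δ. -/
open Filter Topology

/-- Telescoping: if `a (t+1) = a t - b t` with `b ≥ 0` and `a → L`, then `∑ b = a 0 - L`. -/
lemma sp_telescope0 {a b : ℕ → ℝ} {L : ℝ} (hb : ∀ t, 0 ≤ b t)
    (hrec : ∀ t, a (t + 1) = a t - b t)
    (hL : Filter.Tendsto a Filter.atTop (nhds L)) :
    HasSum b (a 0 - L) := by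
  have hps : ∀ M, ∑ t ∈ Finset.range M, b t = a 0 - a M := by
    intro M; induction M with
    | zero => simp
    | succ M ih => rw [Finset.sum_range_succ, ih, hrec M]; ring
  refine (hasSum_iff_tendsto_nat_of_nonneg hb _).2 ?_
  simp only [hps]
  exact tendsto_const_nhds.sub hL

/-- Telescoping: if `a (t+1) = (1-g) a t + b t` with `a, b ≥ 0`, `g > 0`, `∑ b = B`, then
`∑ g * a = a 0 + B`. -/
lemma sp_telescope1 {a b : ℕ → ℝ} {g B : ℝ} (hg : 0 < g)
    (ha : ∀ t, 0 ≤ a t) (hb : ∀ t, 0 ≤ b t)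
    (hrec : ∀ t, a (t + 1) = (1 - g) * a t + b t)
    (hB : HasSum b B) :
    HasSum (fun t => g * a t) (a 0 + B) := by
  have hps : ∀ M, ∑ t ∈ Finset.range M, g * a t = a 0 - a M + ∑ t ∈ Finset.range M, b t := by
    intro M; induction M with
    | zero => simp
    | succ M ih => rw [Finset.sum_range_succ, Finset.sum_range_succ, ih, hrec M]; ring
  have hsummable : Summable (fun t => g * a t) := by
    apply summable_of_sum_range_le (c := a 0 + B) (fun t => mul_nonneg hg.le (ha t))
    intro M; rw [hps M]
    have h1 : ∑ t ∈ Finset.range M, b t ≤ B := sum_le_hasSum _ (fun i _ => hb i) hB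
    linarith [ha M]
  have haz : Filter.Tendsto a Filter.atTop (nhds 0) := by
    have h1 := hsummable.tendsto_atTop_zero
    have h2 := h1.const_mul g⁻¹
    simp only [inv_mul_cancel_left₀ hg.ne', mul_zero] at h2
    exact h2
  refine (hasSum_iff_tendsto_nat_of_nonneg (fun t => mul_nonneg hg.le (ha t)) _).2 ?_
  simp only [hps]
  have h3 : Filter.Tendsto (fun M => a 0 - a M + ∑ t ∈ Finset.range M, b t)
      Filter.atTop (nhds (a 0 - 0 + B)) :=
    ((tendsto_const_nhds (x := a 0)).sub haz).add hB.tendsto_sum_nat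
  simpa using h3

set_option maxHeartbeats 2000000 in
/-- final size upper bound: if `R₀ = Nδ > 1`, where
`δ = ∑ⱼ rⱼ/γⱼ` and `r = ∇φ(0)`, then `S∞ ≤ N/R₀ = 1/δ`. -/
theorem sp_final_size_upper_bound
    (n : ℕ) (hn : 0 < n) (N : ℝ) (hN : 0 < N)
    (γ : Fin n → ℝ) (hγ : ∀ j, γ j ∈ Set.Ioo (0 : ℝ) 1)
    (φ : (Fin n → ℝ) → ℝ) (hφ : HypH n N φ)
    (S : ℕ → ℝ) (I : ℕ → Fin n → ℝ)
    (hsys : SPSystem γ φ S I) (hic : AdmissibleIC N S I)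
    (Sinf : ℝ) (hSinf : Filter.Tendsto S Filter.atTop (nhds Sinf))
    (δ : ℝ) (hδ : δ = ∑ j, fderiv ℝ φ 0 (Pi.single j 1) / γ j)
    (hR0 : 1 < N * δ) :
    Sinf ≤ 1 / δ := by
  obtain ⟨hφC2, hφ0, hφval, hφgrad, hφlast, hφconc⟩ := hφ
  obtain ⟨hrecS, hrec0, hrecsucc⟩ := hsys
  obtain ⟨hS0, hI0nonneg, hI0ne, hsumN⟩ := hic
  have hγ0 : ∀ j, 0 < γ j := fun j => (hγ j).1
  have hγ1 : ∀ j, γ j < 1 := fun j => (hγ j).2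
  have hnlt : n - 1 < n := Nat.sub_lt hn Nat.one_pos
  set r : Fin n → ℝ := fun j => fderiv ℝ φ 0 (Pi.single j 1) with hr
  have h0mem : (0 : Fin n → ℝ) ∈ stateSet n N := ⟨fun j => le_refl 0, by simp [hN.le]⟩
  have hrnonneg : ∀ j, 0 ≤ r j := fun j => hφgrad 0 h0mem j
  have hrlast : 0 < r ⟨n - 1, hnlt⟩ := hφlast hn
  -- the ℕ-indexed versions of I and γ
  set J : ℕ → ℕ → ℝ := fun t k => if h : k < n then I t ⟨k, h⟩ else 0 with hJdef
  set g : ℕ → ℝ := fun k => if h : k < n then γ ⟨k, h⟩ else 0 with hgdef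
  have hsumJ : ∀ t, ∑ k ∈ Finset.range n, J t k = ∑ j, I t j := by
    intro t
    rw [← Fin.sum_univ_eq_sum_range (fun k => J t k) n]
    refine Finset.sum_congr rfl fun j _ => ?_
    simp only [hJdef]
    rw [dif_pos j.isLt]
  have hrecJ0 : ∀ t, J (t + 1) 0 = (1 - g 0) * J t 0 + φ (I t) * S t := by
    intro t
    simp only [hJdef, hgdef]
    rw [dif_pos hn, dif_pos hn, dif_pos hn]
    exact hrec0 t hn
  have hrecJs : ∀ t k, k + 1 < n →
      J (t + 1) (k + 1) = (1 - g (k + 1)) * J t (k + 1) + g k * J t k := by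
    intro t k h
    have hk : k < n := lt_trans (Nat.lt_succ_self k) h
    simp only [hJdef, hgdef]
    rw [dif_pos h, dif_pos h, dif_pos h, dif_pos hk, dif_pos hk]
    exact hrecsucc t ⟨k, hk⟩ h
  have hgnonneg : ∀ k, 0 ≤ g k := by
    intro k; simp only [hgdef]; split
    · exact (hγ0 _).le
    · exact le_rfl
  -- one-step inequality for the total infected population
  have hsumrec : ∀ t, (∀ j, 0 ≤ I t j) →
      ∑ j, I (t + 1) j ≤ (∑ j, I t j) + φ (I t) * S t := by
    intro t hIt
    have hJt : ∀ k, 0 ≤ J t k := by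
      intro k; simp only [hJdef]; split
      · exact hIt _
      · exact le_rfl
    have hgJ : ∀ k, 0 ≤ g k * J t k := fun k => mul_nonneg (hgnonneg k) (hJt k)
    rw [← hsumJ (t + 1), ← hsumJ t]
    obtain ⟨m, hm⟩ := Nat.exists_eq_succ_of_ne_zero hn.ne'
    rw [hm]
    rw [Finset.sum_range_succ' (fun k => J (t + 1) k) m, hrecJ0 t]
    have hc : ∀ k ∈ Finset.range m, J (t + 1) (k + 1) = (1 - g (k + 1)) * J t (k + 1) + g k * J t k := by
      intro k hk
      exact hrecJs t k (by rw [hm]; exact Nat.succ_lt_succ (Finset.mem_range.1 hk))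
    rw [Finset.sum_congr rfl hc, Finset.sum_add_distrib]
    have eq1 : ∑ k ∈ Finset.range m, (1 - g (k + 1)) * J t (k + 1)
        = (∑ k ∈ Finset.range m, J t (k + 1)) - ∑ k ∈ Finset.range m, g (k + 1) * J t (k + 1) := by
      rw [← Finset.sum_sub_distrib]
      exact Finset.sum_congr rfl fun k _ => by ring
    have eq2 : ∑ k ∈ Finset.range (m + 1), J t k
        = (∑ k ∈ Finset.range m, J t (k + 1)) + J t 0 := Finset.sum_range_succ' _ m
    have hle1 : ∑ k ∈ Finset.range m, g k * J t k
        ≤ ∑ k ∈ Finset.range m, g (k + 1) * J t (k + 1) + g 0 * J t 0 := by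
      have : ∑ k ∈ Finset.range (m + 1), g k * J t k
          = ∑ k ∈ Finset.range m, g (k + 1) * J t (k + 1) + g 0 * J t 0 :=
        Finset.sum_range_succ' _ m
      have hmono : ∑ k ∈ Finset.range m, g k * J t k ≤ ∑ k ∈ Finset.range (m + 1), g k * J t k := by
        rw [Finset.sum_range_succ]
        linarith [hgJ m]
      linarith
    have eq3 : (1 - g 0) * J t 0 = J t 0 - g 0 * J t 0 := by ring
    linarith [eq1, eq2, hle1]
  -- the basic invariant
  have inv : ∀ t, 0 < S t ∧ (∀ j, 0 ≤ I t j) ∧ S t + ∑ j, I t j ≤ N := by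
    intro t; induction t with
    | zero => exact ⟨hS0, hI0nonneg, hsumN⟩
    | succ t ih =>
      obtain ⟨hSt, hIt, hNt⟩ := ih
      have hmem : I t ∈ stateSet n N := ⟨hIt, by linarith⟩
      have hφb := hφval _ hmem
      have hS' : 0 < S (t + 1) := by
        rw [hrecS t]; exact mul_pos (by linarith [hφb.2]) hSt
      have hI' : ∀ j, 0 ≤ I (t + 1) j := by
        rintro ⟨jv, hj⟩
        cases jv with
        | zero =>
          rw [show (⟨0, hj⟩ : Fin n) = ⟨0, hn⟩ from rfl, hrec0 t hn]
          exact add_nonneg (mul_nonneg (by linarith [hγ1 ⟨0, hn⟩]) (hIt _))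
            (mul_nonneg hφb.1 hSt.le)
        | succ m =>
          have hm : m < n := lt_trans (Nat.lt_succ_self m) hj
          rw [hrecsucc t ⟨m, hm⟩ hj]
          exact add_nonneg (mul_nonneg (by linarith [hγ1 ⟨m + 1, hj⟩]) (hIt _))
            (mul_nonneg (hγ0 _).le (hIt _))
      refine ⟨hS', hI', ?_⟩
      have hS'' : S (t + 1) = S t - φ (I t) * S t := by rw [hrecS t]; ring
      have := hsumrec t hIt
      linarith
  have hmem : ∀ t, I t ∈ stateSet n N := fun t =>
    ⟨(inv t).2.1, by linarith [(inv t).1, (inv t).2.2]⟩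
  have hφb : ∀ t, 0 ≤ φ (I t) ∧ φ (I t) < 1 := fun t => hφval _ (hmem t)
  -- S is nonincreasing and bounded below by Sinf
  have hSstep : ∀ t, S (t + 1) ≤ S t := by
    intro t
    rw [hrecS t]
    nlinarith [mul_nonneg (hφb t).1 (inv t).1.le]
  have hSmono : ∀ t s, t ≤ s → S s ≤ S t := by
    intro t s hts
    induction s, hts using Nat.le_induction with
    | base => exact le_rfl
    | succ s hts ih => exact le_trans (hSstep s) ih
  have hSinfle : ∀ t, Sinf ≤ S t := fun t =>
    le_of_tendsto hSinf (Filter.eventually_atTop.2 ⟨t, fun s hs => hSmono t s hs⟩)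
  -- sum of new infections
  have hφS : ∀ T, HasSum (fun t => φ (I (T + t)) * S (T + t)) (S T - Sinf) := by
    intro T
    have hlim : Filter.Tendsto (fun t => S (T + t)) Filter.atTop (nhds Sinf) := by
      apply hSinf.comp
      simpa [Nat.add_comm] using tendsto_add_atTop_nat T
    exact sp_telescope0 (a := fun t => S (T + t))
      (b := fun t => φ (I (T + t)) * S (T + t))
      (fun t => mul_nonneg (hφb _).1 (inv _).1.le)
      (fun t => by show S ((T + t) + 1) = S (T + t) - φ (I (T + t)) * S (T + t)
                   rw [hrecS (T + t)]; ring) hlim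
  -- the key sums for each stage
  have key : ∀ m, ∀ hmn : m < n, ∀ T, HasSum (fun t => γ ⟨m, hmn⟩ * I (T + t) ⟨m, hmn⟩)
      ((∑ k ∈ Finset.range (m + 1), J T k) + (S T - Sinf)) := by
    intro m
    induction m with
    | zero =>
      intro hmn T
      have h := sp_telescope1 (a := fun t => I (T + t) ⟨0, hmn⟩)
        (b := fun t => φ (I (T + t)) * S (T + t))
        (hγ0 ⟨0, hmn⟩) (fun t => (inv (T + t)).2.1 _)
        (fun t => mul_nonneg (hφb _).1 (inv _).1.le)
        (fun t => hrec0 (T + t) hn) (hφS T)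
      have hJ0 : ∑ k ∈ Finset.range (0 + 1), J T k = I T ⟨0, hmn⟩ := by
        rw [Finset.sum_range_one]
        simp only [hJdef]
        rw [dif_pos hn]
      rw [hJ0]
      exact h
    | succ m ih =>
      intro hmn T
      have hm : m < n := lt_trans (Nat.lt_succ_self m) hmn
      have h := sp_telescope1 (a := fun t => I (T + t) ⟨m + 1, hmn⟩)
        (b := fun t => γ ⟨m, hm⟩ * I (T + t) ⟨m, hm⟩)
        (hγ0 ⟨m + 1, hmn⟩) (fun t => (inv (T + t)).2.1 _)
        (fun t => mul_nonneg (hγ0 ⟨m, hm⟩).le ((inv (T + t)).2.1 _))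
        (fun t => hrecsucc (T + t) ⟨m, hm⟩ hmn) (ih hm T)
      have hJv : J T (m + 1) = I T ⟨m + 1, hmn⟩ := by
        simp only [hJdef]; rw [dif_pos hmn]
      have heq : I T ⟨m + 1, hmn⟩ + ((∑ k ∈ Finset.range (m + 1), J T k) + (S T - Sinf))
          = (∑ k ∈ Finset.range (m + 1 + 1), J T k) + (S T - Sinf) := by
        rw [show (∑ k ∈ Finset.range (m + 1 + 1), J T k)
              = (∑ k ∈ Finset.range (m + 1), J T k) + J T (m + 1) from Finset.sum_range_succ _ _,
            hJv]
        ring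
      rw [← heq]
      exact h
  -- each component of I tends to zero
  have hIzero : ∀ j : Fin n, Filter.Tendsto (fun t => I t j) Filter.atTop (nhds 0) := by
    intro j
    have hk := key j.1 j.2 0
    simp only [Nat.zero_add, Fin.eta] at hk
    have h1 := hk.summable.tendsto_atTop_zero
    have h2 := h1.const_mul (γ j)⁻¹
    simp only [inv_mul_cancel_left₀ (hγ0 j).ne', mul_zero] at h2
    exact h2
  -- main argument, by contradiction
  by_contra hcon
  push_neg at hcon
  have hδpos : 0 < δ := by
    rw [hδ]
    refine Finset.sum_pos' (fun j _ => div_nonneg (hrnonneg j) (hγ0 j).le)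
      ⟨⟨n - 1, hnlt⟩, Finset.mem_univ _, div_pos hrlast (hγ0 _)⟩
  have hSinfpos : 0 < Sinf := lt_trans (by positivity) hcon
  have hcon' : 1 / Sinf < δ := by
    rw [div_lt_iff₀ hδpos] at hcon
    rw [div_lt_iff₀ hSinfpos]
    nlinarith
  have hne : Nonempty (Fin n) := ⟨⟨0, hn⟩⟩
  set G : ℝ := ∑ j, (γ j)⁻¹ with hGdef
  have hGpos : 0 < G :=
    Finset.sum_pos (fun j _ => inv_pos.2 (hγ0 j)) Finset.univ_nonempty
  set ε : ℝ := min (δ - 1 / Sinf) (r ⟨n - 1, hnlt⟩ / γ ⟨n - 1, hnlt⟩) / (2 * G) with hεdef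
  have hεpos : 0 < ε := by
    apply div_pos (lt_min (by linarith) (div_pos hrlast (hγ0 _))) (by positivity)
  have hεG : ε * G = min (δ - 1 / Sinf) (r ⟨n - 1, hnlt⟩ / γ ⟨n - 1, hnlt⟩) / 2 := by
    rw [hεdef]; field_simp
  have hεG1 : ε * G ≤ (δ - 1 / Sinf) / 2 := by
    rw [hεG]; have := min_le_left (δ - 1 / Sinf) (r ⟨n - 1, hnlt⟩ / γ ⟨n - 1, hnlt⟩); linarith
  have hεG2 : ε * G ≤ (r ⟨n - 1, hnlt⟩ / γ ⟨n - 1, hnlt⟩) / 2 := by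
    rw [hεG]; have := min_le_right (δ - 1 / Sinf) (r ⟨n - 1, hnlt⟩ / γ ⟨n - 1, hnlt⟩); linarith
  -- the little-o bound for φ at 0
  have hdiff : HasFDerivAt φ (fderiv ℝ φ 0) 0 :=
    ((hφC2.differentiable (by norm_num)) 0).hasFDerivAt
  have hlo := Asymptotics.isLittleO_iff.1 (hasFDerivAt_iff_isLittleO_nhds_zero.1 hdiff) hεpos
  rw [Metric.eventually_nhds_iff] at hlo
  obtain ⟨ρ, hρpos, hρ⟩ := hlo
  have hφlow : ∀ x : Fin n → ℝ, ‖x‖ < ρ → (∀ j, 0 ≤ x j) →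
      ∑ j, (r j - ε) * x j ≤ φ x := by
    intro x hx hxnn
    have h1 := hρ (y := x) (by rwa [dist_zero_right])
    rw [zero_add, hφ0, sub_zero] at h1
    have hsingle : ∀ j : Fin n, (fun j' => if j = j' then (1 : ℝ) else 0) = Pi.single j 1 := by
      intro j; funext j'
      by_cases h : j = j'
      · subst h; simp
      · simp [h, Pi.single_eq_of_ne (Ne.symm h)]
    have h2 : fderiv ℝ φ 0 x = ∑ j, x j * r j := by
      conv_lhs => rw [pi_eq_sum_univ x]
      rw [map_sum]
      refine Finset.sum_congr rfl fun j _ => ?_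
      rw [map_smul, hsingle j]
      simp only [hr, smul_eq_mul]
    have h3 : ‖x‖ ≤ ∑ j, x j := by
      rw [pi_norm_le_iff_of_nonneg (Finset.sum_nonneg fun j _ => hxnn j)]
      intro i
      rw [Real.norm_eq_abs, abs_of_nonneg (hxnn i)]
      exact Finset.single_le_sum (fun j _ => hxnn j) (Finset.mem_univ i)
    have h4 := (abs_le.1 (by rwa [Real.norm_eq_abs] at h1)).1
    have h5 : ε * ‖x‖ ≤ ε * ∑ j, x j := mul_le_mul_of_nonneg_left h3 hεpos.le
    have h6 : ∑ j, (r j - ε) * x j = (∑ j, x j * r j) - ε * ∑ j, x j := by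
      rw [Finset.mul_sum, ← Finset.sum_sub_distrib]
      exact Finset.sum_congr rfl fun j _ => by ring
    rw [h6]
    linarith [h2 ▸ h4]
  -- choose T so that ‖I t‖ < ρ for t ≥ T
  have hIpos : ∃ j, ∀ t, 0 < I t j := by
    obtain ⟨⟨jv, hjp⟩, hj⟩ := Function.ne_iff.1 hI0ne
    have h0 : 0 < I 0 ⟨jv, hjp⟩ := lt_of_le_of_ne (hI0nonneg _) (Ne.symm hj)
    refine ⟨⟨jv, hjp⟩, ?_⟩
    clear hj
    cases jv with
    | zero =>
      intro t
      induction t with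
      | zero => exact h0
      | succ t ih =>
        rw [show (⟨0, hjp⟩ : Fin n) = ⟨0, hn⟩ from rfl] at ih ⊢
        rw [hrec0 t hn]
        have h1 : 0 < (1 - γ ⟨0, hn⟩) * I t ⟨0, hn⟩ :=
          mul_pos (by linarith [hγ1 ⟨0, hn⟩]) ih
        nlinarith [mul_nonneg (hφb t).1 (inv t).1.le]
    | succ m =>
      have hm : m < n := lt_trans (Nat.lt_succ_self m) hjp
      intro t
      induction t with
      | zero => exact h0
      | succ t ih =>
        rw [hrecsucc t ⟨m, hm⟩ hjp]
        have h1 : 0 < (1 - γ ⟨m + 1, hjp⟩) * I t ⟨m + 1, hjp⟩ :=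
          mul_pos (by linarith [hγ1 ⟨m + 1, hjp⟩]) ih
        nlinarith [mul_nonneg (hγ0 ⟨m, hm⟩).le ((inv t).2.1 ⟨m, hm⟩)]
  obtain ⟨T, hT⟩ := Metric.tendsto_atTop.1
    ((tendsto_pi_nhds (g := (0 : Fin n → ℝ))).2 (fun j => hIzero j)) ρ hρpos
  have hnormT : ∀ t, ‖I (T + t)‖ < ρ := by
    intro t
    have := hT (T + t) (Nat.le_add_right T t)
    rwa [dist_zero_right] at this
  -- notation for the final estimate
  set D : ℝ := S T - Sinf with hDdef
  have hD0 : 0 ≤ D := sub_nonneg.2 (hSinfle T)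
  set A : Fin n → ℝ := fun j => ∑ k ∈ Finset.range (j.1 + 1), J T k with hAdef
  have hJTnn : ∀ k, 0 ≤ J T k := by
    intro k; simp only [hJdef]; split
    · exact (inv T).2.1 _
    · exact le_rfl
  have hAnn : ∀ j, 0 ≤ A j := fun j =>
    Finset.sum_nonneg fun k _ => hJTnn k
  set F : ℝ := ∑ j, I T j with hFdef
  have hFpos : 0 < F := by
    obtain ⟨j0, hj0⟩ := hIpos
    exact Finset.sum_pos' (fun j _ => (inv T).2.1 j) ⟨j0, Finset.mem_univ _, hj0 T⟩
  have hAF : ∀ j : Fin n, A j ≤ F := by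
    intro j
    have h1 : A j ≤ ∑ k ∈ Finset.range n, J T k := by
      apply Finset.sum_le_sum_of_subset_of_nonneg
      · exact Finset.range_subset_range.2 j.2
      · intro k _ _; exact hJTnn k
    rw [hsumJ T] at h1
    exact h1
  have hAlast : A ⟨n - 1, hnlt⟩ = F := by
    simp only [hAdef]
    rw [show (n - 1) + 1 = n from Nat.succ_pred_eq_of_pos hn, hsumJ T]
  -- the component sums
  have hsumI : ∀ j : Fin n, HasSum (fun t => I (T + t) j) ((γ j)⁻¹ * (A j + D)) := by
    intro j
    have hk := (key j.1 j.2 T).mul_left (γ j)⁻¹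
    simp only [Fin.eta] at hk
    simp only [inv_mul_cancel_left₀ (hγ0 j).ne'] at hk
    exact hk
  -- comparison of sums
  have hRHS : HasSum (fun t => Sinf * ∑ j, (r j - ε) * I (T + t) j)
      (Sinf * ∑ j, (r j - ε) * ((γ j)⁻¹ * (A j + D))) :=
    (hasSum_sum fun j _ => (hsumI j).mul_left (r j - ε)).mul_left Sinf
  have hle : Sinf * ∑ j, (r j - ε) * ((γ j)⁻¹ * (A j + D)) ≤ D := by
    refine hasSum_le ?_ hRHS (hφS T)
    intro t
    have hl := hφlow (I (T + t)) (hnormT t) ((inv (T + t)).2.1)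
    calc Sinf * ∑ j, (r j - ε) * I (T + t) j
        ≤ Sinf * φ (I (T + t)) := mul_le_mul_of_nonneg_left hl hSinfpos.le
      _ ≤ S (T + t) * φ (I (T + t)) :=
          mul_le_mul_of_nonneg_right (hSinfle _) (hφb _).1
      _ = φ (I (T + t)) * S (T + t) := mul_comm _ _
  -- lower bound for the sum
  have hδ' : δ = ∑ j, r j * (γ j)⁻¹ := by
    rw [hδ]
    exact Finset.sum_congr rfl fun j _ => (div_eq_mul_inv _ _)
  have e1 : ∑ j, (r j - ε) * ((γ j)⁻¹ * (A j + D))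
      = (∑ j, r j * (γ j)⁻¹ * (A j + D)) - ε * ∑ j, (γ j)⁻¹ * (A j + D) := by
    rw [Finset.mul_sum, ← Finset.sum_sub_distrib]
    exact Finset.sum_congr rfl fun j _ => by ring
  have e2 : ∑ j, r j * (γ j)⁻¹ * (A j + D)
      = (∑ j, r j * (γ j)⁻¹ * A j) + (∑ j, r j * (γ j)⁻¹) * D := by
    rw [Finset.sum_mul, ← Finset.sum_add_distrib]
    exact Finset.sum_congr rfl fun j _ => by ring
  have e3 : r ⟨n - 1, hnlt⟩ * (γ ⟨n - 1, hnlt⟩)⁻¹ * F ≤ ∑ j, r j * (γ j)⁻¹ * A j := by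
    rw [← hAlast]
    exact Finset.single_le_sum
      (fun j _ => mul_nonneg (mul_nonneg (hrnonneg j) (inv_pos.2 (hγ0 j)).le) (hAnn j))
      (Finset.mem_univ _)
  have e4 : ∑ j, (γ j)⁻¹ * (A j + D) ≤ G * (F + D) := by
    rw [hGdef, Finset.sum_mul]
    refine Finset.sum_le_sum fun j _ => ?_
    exact mul_le_mul_of_nonneg_left (by linarith [hAF j]) (inv_pos.2 (hγ0 j)).le
  have hQlow : δ * D + r ⟨n - 1, hnlt⟩ * (γ ⟨n - 1, hnlt⟩)⁻¹ * F - ε * (G * (F + D))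
      ≤ ∑ j, (r j - ε) * ((γ j)⁻¹ * (A j + D)) := by
    rw [e1]
    have h1 := mul_le_mul_of_nonneg_left e4 hεpos.le
    rw [hδ'] at *
    nlinarith [e2, e3]
  -- final contradiction
  have s1 : 1 < Sinf * (δ - ε * G) := by
    have h1 : 1 / Sinf < δ - ε * G := by linarith
    calc (1 : ℝ) = Sinf * (1 / Sinf) := by field_simp
      _ < Sinf * (δ - ε * G) := by exact mul_lt_mul_of_pos_left h1 hSinfpos
  have s2 : 0 < r ⟨n - 1, hnlt⟩ * (γ ⟨n - 1, hnlt⟩)⁻¹ - ε * G := by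
    have h1 : 0 < r ⟨n - 1, hnlt⟩ / γ ⟨n - 1, hnlt⟩ := div_pos hrlast (hγ0 _)
    have h2 : r ⟨n - 1, hnlt⟩ / γ ⟨n - 1, hnlt⟩ = r ⟨n - 1, hnlt⟩ * (γ ⟨n - 1, hnlt⟩)⁻¹ :=
      div_eq_mul_inv _ _
    linarith [hεG2, h2 ▸ h1]
  have s3 : Sinf * (δ * D + r ⟨n - 1, hnlt⟩ * (γ ⟨n - 1, hnlt⟩)⁻¹ * F - ε * (G * (F + D)))
      ≤ Sinf * ∑ j, (r j - ε) * ((γ j)⁻¹ * (A j + D)) :=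
    mul_le_mul_of_nonneg_left hQlow hSinfpos.le
  have s5 : Sinf * (δ * D + r ⟨n - 1, hnlt⟩ * (γ ⟨n - 1, hnlt⟩)⁻¹ * F - ε * (G * (F + D)))
      = Sinf * (δ - ε * G) * D + Sinf * (r ⟨n - 1, hnlt⟩ * (γ ⟨n - 1, hnlt⟩)⁻¹ - ε * G) * F := by
    ring
  have s6 : 1 * D ≤ Sinf * (δ - ε * G) * D := mul_le_mul_of_nonneg_right s1.le hD0
  have s7 : 0 < Sinf * (r ⟨n - 1, hnlt⟩ * (γ ⟨n - 1, hnlt⟩)⁻¹ - ε * G) * F :=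
    mul_pos (mul_pos hSinfpos s2) hFpos
  have s8 := s3
  rw [s5] at s8
  have t1 := le_trans s8 hle
  nlinarith [s6, s7, t1]
end

section
/- (Final size lower bound.) Suppose R₀ = Nδ < 1 and the initial condition satisfies I(0) = (I⁰, 0, …, 0) with I⁰ > 0 and S(0) + I⁰ ≤ N, S(0) > 0. Then S∞ ≥ S(0)·(1 − δ(S(0)+I⁰))/(1 − δS(0)) > 0. -/
open Filter Topology

/-- final size lower bound: if `R₀ = Nδ < 1` and all initial infected
individuals are in the first class, `I(0) = (I⁰,0,…,0)` with `I⁰ > 0`, then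
`S∞ ≥ S(0)(1 − δ(S(0)+I⁰))/(1 − δS(0)) > 0`. -/
theorem sp_final_size_lower_bound
    (n : ℕ) (hn : 0 < n) (N : ℝ) (hN : 0 < N)
    (γ : Fin n → ℝ) (hγ : ∀ j, γ j ∈ Set.Ioo (0 : ℝ) 1)
    (φ : (Fin n → ℝ) → ℝ) (hφ : HypH n N φ)
    (S : ℕ → ℝ) (I : ℕ → Fin n → ℝ)
    (hsys : SPSystem γ φ S I) (hic : AdmissibleIC N S I)
    (I0 : ℝ) (hI00 : I 0 ⟨0, hn⟩ = I0) (hI0pos : 0 < I0)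
    (hI0rest : ∀ j : Fin n, j.val ≠ 0 → I 0 j = 0)
    (Sinf : ℝ) (hSinf : Filter.Tendsto S Filter.atTop (nhds Sinf))
    (δ : ℝ) (hδ : δ = ∑ j, fderiv ℝ φ 0 (Pi.single j 1) / γ j)
    (hR0 : N * δ < 1) :
    S 0 * (1 - δ * (S 0 + I0)) / (1 - δ * S 0) ≤ Sinf ∧
    0 < S 0 * (1 - δ * (S 0 + I0)) / (1 - δ * S 0) := by
  classical
  obtain ⟨hC2, hφ0, hrange, hgrad, -, hconc⟩ := hφ
  obtain ⟨hS0, hI0nn, -, hicN⟩ := hic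
  obtain ⟨hseq, hrec0', hrecS'⟩ := hsys
  obtain ⟨m, rfl⟩ : ∃ m, n = m + 1 := ⟨n - 1, (Nat.succ_pred_eq_of_pos hn).symm⟩
  set r : Fin (m+1) → ℝ := fun j => fderiv ℝ φ 0 (Pi.single j 1) with hr_def
  have hmem0 : (0 : Fin (m+1) → ℝ) ∈ stateSet (m+1) N := by
    refine ⟨fun j => le_refl 0, ?_⟩
    simp [hN.le]
  have hr : ∀ j, 0 ≤ r j := fun j => hgrad 0 hmem0 j
  have hγ0 : ∀ j, (0:ℝ) < γ j := fun j => (hγ j).1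
  have hγ1 : ∀ j, γ j < 1 := fun j => (hγ j).2
  have hδnn : 0 ≤ δ := by
    rw [hδ]
    exact Finset.sum_nonneg fun j _ => div_nonneg (hr j) (hγ0 j).le
  -- clean recursions
  have rec0 : ∀ t, I (t+1) 0 = (1 - γ 0) * I t 0 + φ (I t) * S t := by
    intro t
    simpa using hrec0' t hn
  have recS : ∀ t (k : Fin m), I (t+1) k.succ
      = (1 - γ k.succ) * I t k.succ + γ k.castSucc * I t k.castSucc := by
    intro t k
    have h : (k.castSucc : Fin (m+1)).val + 1 < m + 1 := by
      simpa using k.isLt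
    have := hrecS' t k.castSucc h
    have e : (⟨(k.castSucc : Fin (m+1)).val + 1, h⟩ : Fin (m+1)) = k.succ := by
      apply Fin.ext; simp
    rw [e] at this
    exact this
  -- invariant
  have inv : ∀ t, 0 ≤ S t ∧ (∀ j, 0 ≤ I t j) ∧ S t + ∑ j, I t j ≤ N := by
    intro t
    induction t with
    | zero => exact ⟨hS0.le, hI0nn, hicN⟩
    | succ t ih =>
      obtain ⟨hSt, hIt, hNt⟩ := ih
      have hmem : I t ∈ stateSet (m+1) N := ⟨hIt, by linarith⟩
      obtain ⟨hφ0t, hφ1t⟩ := hrange (I t) hmem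
      refine ⟨?_, ?_, ?_⟩
      · rw [hseq t]
        exact mul_nonneg (by linarith) hSt
      · intro j
        refine Fin.cases ?_ ?_ j
        · rw [rec0 t]
          have := hIt 0
          have h1 : 0 ≤ (1 - γ 0) * I t 0 := mul_nonneg (by linarith [hγ1 0]) this
          nlinarith
        · intro k
          rw [recS t k]
          have h1 : 0 ≤ (1 - γ k.succ) * I t k.succ :=
            mul_nonneg (by linarith [hγ1 k.succ]) (hIt k.succ)
          have h2 : 0 ≤ γ k.castSucc * I t k.castSucc :=
            mul_nonneg (hγ0 k.castSucc).le (hIt k.castSucc)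
          linarith
      · have E1 : ∑ j, I (t+1) j
            = ((1 - γ 0) * I t 0 + φ (I t) * S t)
              + ((∑ k : Fin m, (1 - γ k.succ) * I t k.succ)
              + (∑ k : Fin m, γ k.castSucc * I t k.castSucc)) := by
          rw [Fin.sum_univ_succ, rec0 t,
            show (∑ k : Fin m, I (t+1) k.succ)
              = ∑ k : Fin m, ((1 - γ k.succ) * I t k.succ + γ k.castSucc * I t k.castSucc)
            from Finset.sum_congr rfl (fun k _ => recS t k),
            Finset.sum_add_distrib]
        have E2 : (∑ k : Fin m, γ k.castSucc * I t k.castSucc)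
              + γ (Fin.last m) * I t (Fin.last m)
            = ∑ j, γ j * I t j :=
          (Fin.sum_univ_castSucc (f := fun j => γ j * I t j)).symm
        have E3 : ∑ j, γ j * I t j = γ 0 * I t 0 + ∑ k : Fin m, γ k.succ * I t k.succ :=
          Fin.sum_univ_succ _
        have E4 : ∑ j, I t j = I t 0 + ∑ k : Fin m, I t k.succ := Fin.sum_univ_succ _
        have E5 : ∑ k : Fin m, (1 - γ k.succ) * I t k.succ
            = (∑ k : Fin m, I t k.succ) - ∑ k : Fin m, γ k.succ * I t k.succ := by
          rw [← Finset.sum_sub_distrib]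
          exact Finset.sum_congr rfl fun k _ => by ring
        have hlast : 0 ≤ γ (Fin.last m) * I t (Fin.last m) :=
          mul_nonneg (hγ0 _).le (hIt _)
        have hSeq : S (t+1) = S t - φ (I t) * S t := by rw [hseq t]; ring
        linarith
  have memt : ∀ t, I t ∈ stateSet (m+1) N := fun t =>
    ⟨(inv t).2.1, by linarith [(inv t).1, (inv t).2.2]⟩
  have hφt : ∀ t, 0 ≤ φ (I t) ∧ φ (I t) < 1 := fun t => hrange _ (memt t)
  -- product form of S
  have hprod : ∀ T, S T = S 0 * ∏ t ∈ Finset.range T, (1 - φ (I t)) := by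
    intro T
    induction T with
    | zero => simp
    | succ T ih => rw [Finset.prod_range_succ, hseq T, ih]; ring
  have hprodge : ∀ T, 1 - ∑ t ∈ Finset.range T, φ (I t)
      ≤ ∏ t ∈ Finset.range T, (1 - φ (I t)) := by
    intro T
    induction T with
    | zero => simp
    | succ T ih =>
      rw [Finset.prod_range_succ, Finset.sum_range_succ]
      have h1 : 0 ≤ φ (I T) := (hφt T).1
      have h2 : φ (I T) ≤ 1 := (hφt T).2.le
      have h3 : 0 ≤ ∑ t ∈ Finset.range T, φ (I t) :=
        Finset.sum_nonneg fun t _ => (hφt t).1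
      nlinarith [mul_nonneg h3 h1]
  -- telescoping identities
  have hStel : ∀ T, S T + ∑ t ∈ Finset.range T, φ (I t) * S t = S 0 := by
    intro T
    induction T with
    | zero => simp
    | succ T ih =>
      rw [Finset.sum_range_succ, hseq T]
      linear_combination ih
  have hB : ∀ T, γ 0 * (∑ t ∈ Finset.range T, I t 0) + I T 0
      = I 0 0 + ∑ t ∈ Finset.range T, φ (I t) * S t := by
    intro T
    induction T with
    | zero => simp
    | succ T ih =>
      rw [Finset.sum_range_succ, Finset.sum_range_succ, rec0 T]
      linear_combination ih
  have hC : ∀ (k : Fin m) (T : ℕ),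
      γ k.succ * (∑ t ∈ Finset.range T, I t k.succ) + I T k.succ
      = I 0 k.succ + γ k.castSucc * (∑ t ∈ Finset.range T, I t k.castSucc) := by
    intro k T
    induction T with
    | zero => simp
    | succ T ih =>
      rw [Finset.sum_range_succ, Finset.sum_range_succ, recS T k]
      linear_combination ih
  have hI00' : I 0 0 = I0 := by simpa using hI00
  have hγA : ∀ (T : ℕ) (j : Fin (m+1)),
      γ j * (∑ t ∈ Finset.range T, I t j) ≤ I0 + (S 0 - S T) := by
    intro T j
    induction j using Fin.induction with
    | zero =>
      have h1 := hB T
      have h2 := hStel T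
      have h4 := (inv T).2.1 0
      rw [hI00'] at h1
      linarith
    | succ k ih =>
      have h1 := hC k T
      have h2 : I 0 k.succ = 0 := hI0rest k.succ (by simp)
      have h4 := (inv T).2.1 k.succ
      linarith
  -- concavity bound: φ x ≤ ∑ r j * x j on the state set
  have hφle : ∀ x ∈ stateSet (m+1) N, φ x ≤ ∑ j, r j * x j := by
    intro x hx
    have hdiff : Differentiable ℝ φ := hC2.differentiable (by norm_num)
    have hderiv : HasDerivAt (fun s : ℝ => φ (s • x)) (fderiv ℝ φ 0 x) 0 := by
      have h1 : HasDerivAt (fun s : ℝ => s • x) x 0 := by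
        simpa using (hasDerivAt_id (0:ℝ)).smul_const x
      have h2 : HasFDerivAt φ (fderiv ℝ φ 0) ((0:ℝ) • x) := by
        rw [zero_smul]; exact (hdiff 0).hasFDerivAt
      exact h2.comp_hasDerivAt 0 h1
    have key : φ x ≤ fderiv ℝ φ 0 x := by
      have hslope := hasDerivAt_iff_tendsto_slope.mp hderiv
      have hsub : 𝓝[Set.Ioo (0:ℝ) 1] (0:ℝ) ≤ 𝓝[≠] (0:ℝ) :=
        nhdsWithin_mono _ (fun s hs => ne_of_gt hs.1)
      have hNB : (𝓝[Set.Ioo (0:ℝ) 1] (0:ℝ)).NeBot := by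
        apply mem_closure_iff_nhdsWithin_neBot.mp
        rw [closure_Ioo (by norm_num : (0:ℝ) ≠ 1)]
        exact ⟨le_refl 0, by norm_num⟩
      refine ge_of_tendsto (hslope.mono_left hsub) ?_
      filter_upwards [self_mem_nhdsWithin] with s hs
      obtain ⟨hs0, hs1⟩ := hs
      have hcc := hconc.2 hx hmem0 hs0.le (by linarith : (0:ℝ) ≤ 1 - s) (by ring)
      simp only [smul_zero, add_zero, smul_eq_mul, hφ0, mul_zero] at hcc
      rw [slope_def_field]
      rw [zero_smul, hφ0, sub_zero, sub_zero, le_div_iff₀ hs0]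
      linarith
    have hx_eq : x = ∑ j, x j • (Pi.single j 1 : Fin (m+1) → ℝ) := by
      funext i
      rw [Finset.sum_apply]
      simp [Pi.single_apply]
    calc φ x ≤ fderiv ℝ φ 0 x := key
      _ = ∑ j, r j * x j := by
          conv_lhs => rw [hx_eq]
          rw [map_sum]
          exact Finset.sum_congr rfl fun j _ => by
            rw [map_smul]; simp [hr_def, smul_eq_mul, mul_comm]
  -- bound on the cumulative incidence
  have hsumφ : ∀ T, ∑ t ∈ Finset.range T, φ (I t) ≤ δ * (I0 + (S 0 - S T)) := by
    intro T
    have h1 : ∑ t ∈ Finset.range T, φ (I t)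
        ≤ ∑ t ∈ Finset.range T, ∑ j, r j * I t j :=
      Finset.sum_le_sum fun t _ => hφle (I t) (memt t)
    have h2 : ∑ t ∈ Finset.range T, ∑ j, r j * I t j
        = ∑ j, r j * ∑ t ∈ Finset.range T, I t j := by
      rw [Finset.sum_comm]
      exact Finset.sum_congr rfl fun j _ => (Finset.mul_sum _ _ _).symm
    have h3 : ∑ j, r j * ∑ t ∈ Finset.range T, I t j
        ≤ ∑ j, (r j / γ j) * (I0 + (S 0 - S T)) := by
      apply Finset.sum_le_sum
      intro j _
      rw [div_mul_eq_mul_div, le_div_iff₀ (hγ0 j)]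
      nlinarith [mul_le_mul_of_nonneg_left (hγA T j) (hr j)]
    have h4 : ∑ j, (r j / γ j) * (I0 + (S 0 - S T)) = δ * (I0 + (S 0 - S T)) := by
      rw [hδ]
      exact (Finset.sum_mul _ _ _).symm
    linarith
  -- initial total and positivity of denominators
  have hsum0 : ∑ j, I 0 j = I0 := by
    rw [Fin.sum_univ_succ, hI00']
    have hz : ∀ k : Fin m, I 0 k.succ = 0 := fun k => hI0rest k.succ (by simp)
    simp [hz]
  have hS0N : S 0 + I0 ≤ N := by rw [← hsum0]; exact hicN
  have hδN : δ * (S 0 + I0) < 1 := by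
    have h1 : δ * (S 0 + I0) ≤ δ * N := mul_le_mul_of_nonneg_left hS0N hδnn
    have h2 : δ * N = N * δ := mul_comm _ _
    linarith
  have hden : 0 < 1 - δ * S 0 := by
    have h1 : δ * S 0 ≤ δ * (S 0 + I0) :=
      mul_le_mul_of_nonneg_left (by linarith) hδnn
    linarith
  have hnum : 0 < 1 - δ * (S 0 + I0) := by linarith
  -- per-time lower bound on S
  have hSTbound : ∀ T, S 0 * (1 - δ * (S 0 + I0)) / (1 - δ * S 0) ≤ S T := by
    intro T
    have hkey : S 0 * (1 - δ * (I0 + (S 0 - S T))) ≤ S T := by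
      calc S 0 * (1 - δ * (I0 + (S 0 - S T)))
          ≤ S 0 * (1 - ∑ t ∈ Finset.range T, φ (I t)) := by
            apply mul_le_mul_of_nonneg_left _ hS0.le
            linarith [hsumφ T]
        _ ≤ S 0 * ∏ t ∈ Finset.range T, (1 - φ (I t)) :=
            mul_le_mul_of_nonneg_left (hprodge T) hS0.le
        _ = S T := (hprod T).symm
    rw [div_le_iff₀ hden]
    linear_combination hkey
  exact ⟨ge_of_tendsto' hSinf hSTbound, div_pos (mul_pos hS0 hnum) hden⟩
end

section
/- (Final size equation, exponential incidence.) For the staged progression system with φ(I) = 1 − exp(−∑ⱼ βⱼIⱼ), βⱼ ≥ 0, βₙ > 0, and admissible initial condition, S∞ satisfies log(S(0)/S∞) = ∑_{j=1}^n (βⱼ/γⱼ)(S(0) + ∑_{i=1}^{j} Iᵢ(0)) − R₀·S∞/N, where R₀ = N∑ⱼ βⱼ/γⱼ. Moreover this is the unique solution of that equation in (0, S(0)), and S∞ < N/R₀. -/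
open Filter Topology

set_option maxHeartbeats 2000000 in
/-- final size equation for exponential incidence:
with `φ(I) = 1 − exp(−∑ⱼ βⱼIⱼ)`, the limit `S∞` lies in `(0, S(0))`, satisfies
`log(S(0)/S∞) = ∑ⱼ (βⱼ/γⱼ)(S(0) + ∑_{i≤j} Iᵢ(0)) − R₀ S∞/N`, is the unique solution of
that equation in `(0, S(0))`, and `S∞ < N/R₀`. -/
theorem sp_final_size_equation_exponential
    (n : ℕ) (hn : 0 < n) (N : ℝ) (hN : 0 < N)
    (γ β : Fin n → ℝ) (hγ : ∀ j, γ j ∈ Set.Ioo (0 : ℝ) 1)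
    (hβ : ∀ j, 0 ≤ β j) (hβn : 0 < β ⟨n - 1, Nat.sub_lt hn Nat.one_pos⟩)
    (φ : (Fin n → ℝ) → ℝ) (hφ : φ = fun I => 1 - Real.exp (-(∑ j, β j * I j)))
    (S : ℕ → ℝ) (I : ℕ → Fin n → ℝ)
    (hsys : SPSystem γ φ S I) (hic : AdmissibleIC N S I)
    (Sinf : ℝ) (hSinf : Filter.Tendsto S Filter.atTop (nhds Sinf))
    (R0 : ℝ) (hR0 : R0 = N * ∑ j, β j / γ j) :
    Sinf ∈ Set.Ioo 0 (S 0) ∧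
    Real.log (S 0 / Sinf) =
      (∑ j, (β j / γ j) * (S 0 + ∑ i ∈ Finset.Iic j, I 0 i)) - R0 * Sinf / N ∧
    (∀ x ∈ Set.Ioo (0 : ℝ) (S 0),
      Real.log (S 0 / x) =
        (∑ j, (β j / γ j) * (S 0 + ∑ i ∈ Finset.Iic j, I 0 i)) - R0 * x / N → x = Sinf) ∧
    Sinf < N / R0 := by
  obtain ⟨hrec, hrec0, hrecS⟩ := hsys
  obtain ⟨hS0, hI0, hI0ne, hle⟩ := hic
  set x : ℕ → ℝ := fun t => ∑ j, β j * I t j with hxdef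
  clear_value x
  have hφI : ∀ t, φ (I t) = 1 - Real.exp (-(x t)) := by intro t; rw [hφ, hxdef]
  have hS1 : ∀ t, S (t+1) = Real.exp (-(x t)) * S t := by
    intro t; rw [hrec t, hφI t]; ring
  have hSpos : ∀ t, 0 < S t := by
    intro t; induction t with
    | zero => exact hS0
    | succ t ih => rw [hS1 t]; positivity
  have hIpos : ∀ t j, 0 ≤ I t j := by
    intro t; induction t with
    | zero => exact hI0
    | succ t ih =>
      have hxnn : 0 ≤ x t := by
        simp only [hxdef]; exact Finset.sum_nonneg fun j _ => mul_nonneg (hβ j) (ih j)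
      have hφnn : 0 ≤ φ (I t) := by
        rw [hφI t]
        have : Real.exp (-(x t)) ≤ 1 := Real.exp_le_one_iff.mpr (by linarith)
        linarith
      rintro ⟨jv, hjv⟩
      cases jv with
      | zero =>
        rw [show (⟨0, hjv⟩ : Fin n) = ⟨0, hn⟩ from rfl, hrec0 t hn]
        have h1 := (hγ ⟨0, hn⟩).2
        have h2 := ih ⟨0, hn⟩
        have h3 := (hSpos t).le
        nlinarith [mul_nonneg hφnn h3]
      | succ m =>
        have hm : m < n := by omega
        rw [show (⟨m+1, hjv⟩ : Fin n) = ⟨(⟨m, hm⟩ : Fin n).val + 1, hjv⟩ from rfl,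
          hrecS t ⟨m, hm⟩ hjv]
        have h1 := (hγ ⟨m+1, hjv⟩).2
        have h2 := (hγ ⟨m, hm⟩).1
        have h3 := ih ⟨m+1, hjv⟩
        have h4 := ih ⟨m, hm⟩
        nlinarith
  have hxnn : ∀ t, 0 ≤ x t := by
    intro t
    simp only [hxdef]; exact Finset.sum_nonneg fun j _ => mul_nonneg (hβ j) (hIpos t j)
  set P : Fin n → ℕ → ℝ := fun j t => ∑ i ∈ Finset.Iic j, I t i with hPdef
  clear_value P
  have hIic0 : ∀ h0 : 0 < n, Finset.Iic (⟨0, h0⟩ : Fin n) = {⟨0, h0⟩} := by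
    intro h0; ext ⟨i, hi⟩
    simp only [Finset.mem_Iic, Finset.mem_singleton, Fin.le_def, Fin.mk.injEq]
    omega
  have hIicS : ∀ m (h : m+1 < n), Finset.Iic (⟨m+1, h⟩ : Fin n) =
      insert (⟨m+1, h⟩ : Fin n) (Finset.Iic ⟨m, by omega⟩) := by
    intro m h; ext ⟨i, hi⟩
    simp only [Finset.mem_Iic, Finset.mem_insert, Fin.le_def, Fin.mk.injEq]
    omega
  have hTel : ∀ (j : Fin n) (t : ℕ),
      S (t+1) + P j (t+1) = S t + P j t - γ j * I t j := by
    have key : ∀ m (hm : m < n) (t : ℕ),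
        S (t+1) + P ⟨m, hm⟩ (t+1) = S t + P ⟨m, hm⟩ t - γ ⟨m, hm⟩ * I t ⟨m, hm⟩ := by
      intro m
      induction m with
      | zero =>
        intro hm t
        simp only [hPdef, hIic0 hm, Finset.sum_singleton]
        rw [hrec0 t hm, hrec t, hφI t]
        ring
      | succ m ih =>
        intro hm t
        have hm' : m < n := by omega
        have hnot : (⟨m+1, hm⟩ : Fin n) ∉ Finset.Iic (⟨m, hm'⟩ : Fin n) := by
          simp [Finset.mem_Iic, Fin.le_def]
        simp only [hPdef, hIicS m hm, Finset.sum_insert hnot]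
        have h1 := ih hm' t
        simp only [hPdef] at h1
        have h2 := hrecS t ⟨m, hm'⟩ hm
        linarith
    intro j t
    exact key j.1 j.2 t
  have hSumT : ∀ (j : Fin n) (T : ℕ),
      γ j * ∑ t ∈ Finset.range T, I t j = S 0 + P j 0 - (S T + P j T) := by
    intro j T
    induction T with
    | zero => simp
    | succ T ih =>
      rw [Finset.sum_range_succ, mul_add, ih]
      have := hTel j T
      linarith
  have hPnn : ∀ (j : Fin n) t, 0 ≤ P j t := by
    intro j t
    simp only [hPdef]; exact Finset.sum_nonneg fun i _ => hIpos t i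
  have hBound : ∀ (j : Fin n) (T : ℕ),
      ∑ t ∈ Finset.range T, I t j ≤ (S 0 + P j 0) / γ j := by
    intro j T
    have hγj := (hγ j).1
    rw [le_div_iff₀ hγj, mul_comm]
    rw [hSumT j T]
    have := (hSpos T).le
    have := hPnn j T
    linarith
  have hSumJ : ∀ j : Fin n, Summable fun t => I t j := fun j =>
    summable_of_sum_range_le (fun t => hIpos t j) (hBound j)
  have hPto0 : ∀ j : Fin n, Filter.Tendsto (fun t => P j t) Filter.atTop (nhds 0) := by
    intro j
    have h : Filter.Tendsto (fun t => ∑ i ∈ Finset.Iic j, I t i) Filter.atTop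
        (nhds (∑ _i ∈ Finset.Iic j, (0 : ℝ))) :=
      tendsto_finset_sum _ fun i _ => (hSumJ i).tendsto_atTop_zero
    simpa [hPdef] using h
  have hTsum : ∀ j : Fin n, γ j * ∑' t, I t j = S 0 + P j 0 - Sinf := by
    intro j
    have h1 : Filter.Tendsto (fun T => γ j * ∑ t ∈ Finset.range T, I t j)
        Filter.atTop (nhds (γ j * ∑' t, I t j)) :=
      ((hSumJ j).hasSum.tendsto_sum_nat).const_mul _
    have h2 : Filter.Tendsto (fun T => S 0 + P j 0 - (S T + P j T))
        Filter.atTop (nhds (S 0 + P j 0 - (Sinf + 0))) :=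
      tendsto_const_nhds.sub (hSinf.add (hPto0 j))
    rw [add_zero] at h2
    have heqf : (fun T => γ j * ∑ t ∈ Finset.range T, I t j)
        = fun T => S 0 + P j 0 - (S T + P j T) := funext (hSumT j)
    rw [heqf] at h1
    exact tendsto_nhds_unique h1 h2
  have hxsum : Summable x := by
    rw [hxdef]
    exact summable_sum fun j _ => (hSumJ j).mul_left (β j)
  set X : ℝ := ∑' t, x t with hXdef
  clear_value X
  have hXval : X = ∑ j, β j * ∑' t, I t j := by
    rw [hXdef, hxdef]
    rw [Summable.tsum_finsetSum fun j _ => (hSumJ j).mul_left (β j)]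
    exact Finset.sum_congr rfl fun j _ => tsum_mul_left
  have hSexp : ∀ T, S T = Real.exp (-(∑ t ∈ Finset.range T, x t)) * S 0 := by
    intro T
    induction T with
    | zero => simp
    | succ T ih =>
      rw [Finset.sum_range_succ, neg_add, Real.exp_add, hS1 T, ih]
      ring
  have hXlim : Filter.Tendsto (fun T => ∑ t ∈ Finset.range T, x t)
      Filter.atTop (nhds X) := by rw [hXdef]; exact hxsum.hasSum.tendsto_sum_nat
  have hSlim : Filter.Tendsto S Filter.atTop (nhds (Real.exp (-X) * S 0)) := by
    have h : Filter.Tendsto (fun T => Real.exp (-(∑ t ∈ Finset.range T, x t)) * S 0)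
        Filter.atTop (nhds (Real.exp (-X) * S 0)) :=
      ((Real.continuous_exp.tendsto _).comp hXlim.neg).mul_const _
    exact h.congr fun T => (hSexp T).symm
  have hSinfval : Sinf = Real.exp (-X) * S 0 := tendsto_nhds_unique hSinf hSlim
  have hSinfpos : 0 < Sinf := by rw [hSinfval]; positivity
  -- existence of a positive initial infected class and propagation to last class
  obtain ⟨k, hk⟩ := Function.ne_iff.mp hI0ne
  have hk' : I 0 k ≠ 0 := by simpa using hk
  have hkpos : 0 < I 0 k := (hI0 k).lt_of_ne (Ne.symm hk')
  set klast : Fin n := ⟨n - 1, Nat.sub_lt hn Nat.one_pos⟩ with hklast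
  clear_value klast
  have hβk : 0 < β klast := hβn
  have hprop : ∀ m (h : k.val + m < n), 0 < I m ⟨k.val + m, h⟩ := by
    intro m
    induction m with
    | zero =>
      intro h
      have he : (⟨k.val + 0, h⟩ : Fin n) = k := by
        simp [Fin.ext_iff]
      rw [he]; exact hkpos
    | succ m ih =>
      intro h
      have h' : k.val + m < n := by omega
      have h'' : k.val + m + 1 < n := by omega
      have hr := hrecS m ⟨k.val + m, h'⟩ h''
      have he : (⟨k.val + (m+1), h⟩ : Fin n) = (⟨k.val + m + 1, h''⟩ : Fin n) := rfl
      rw [he, hr]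
      have h1 := (hγ (⟨k.val + m + 1, h''⟩ : Fin n)).2
      have h2 := (hγ (⟨k.val + m, h'⟩ : Fin n)).1
      have h3 := hIpos m ⟨k.val + m + 1, h''⟩
      have h4 := ih h'
      nlinarith
  have hlastpos : 0 < I (n - 1 - k.val) klast := by
    have h : k.val + (n - 1 - k.val) < n := by omega
    have hp := hprop (n - 1 - k.val) h
    have he : (⟨k.val + (n - 1 - k.val), h⟩ : Fin n) = klast := by
      have := k.isLt
      simp only [hklast, Fin.ext_iff]
      omega
    rwa [he] at hp
  have hXpos : 0 < X := by
    have h1 : 0 < β klast * I (n - 1 - k.val) klast := mul_pos hβk hlastpos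
    have h2 : β klast * I (n - 1 - k.val) klast ≤ x (n - 1 - k.val) := by
      simp only [hxdef]
      exact Finset.single_le_sum (f := fun j => β j * I (n - 1 - k.val) j)
        (fun j _ => mul_nonneg (hβ j) (hIpos _ j)) (Finset.mem_univ klast)
    have h3 : x (n - 1 - k.val) ≤ X := by
      rw [hXdef]; exact Summable.le_tsum hxsum _ fun t _ => hxnn t
    linarith
  have hSinfltS0 : Sinf < S 0 := by
    rw [hSinfval]
    have h1 : Real.exp (-X) < 1 := Real.exp_lt_one_iff.mpr (by linarith)
    nlinarith
  set c : ℝ := ∑ j, β j / γ j with hcdef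
  clear_value c
  set A : ℝ := ∑ j, (β j / γ j) * (S 0 + P j 0) with hAdef
  clear_value A
  have hAexpr : A = ∑ j, (β j / γ j) * (S 0 + ∑ i ∈ Finset.Iic j, I 0 i) := by
    rw [hAdef]; simp only [hPdef]
  have hlog : Real.log (S 0 / Sinf) = X := by
    rw [hSinfval, show S 0 / (Real.exp (-X) * S 0) = Real.exp X by
      rw [Real.exp_neg]; field_simp]
    exact Real.log_exp X
  have hXeq : X = A - c * Sinf := by
    rw [hXval]
    have hterm : ∀ j : Fin n, β j * ∑' t, I t j
        = (β j / γ j) * (S 0 + P j 0) - (β j / γ j) * Sinf := by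
      intro j
      have hγj := (hγ j).1
      have ht : ∑' t, I t j = (S 0 + P j 0 - Sinf) / γ j := by
        rw [eq_div_iff hγj.ne', mul_comm]
        exact hTsum j
      rw [ht]
      field_simp
    rw [Finset.sum_congr rfl fun j _ => hterm j, Finset.sum_sub_distrib, hAdef,
      hcdef, Finset.sum_mul]
  have hEq : Real.log (S 0 / Sinf) = A - c * Sinf := by rw [hlog, hXeq]
  have hRc : ∀ y : ℝ, R0 * y / N = c * y := by
    intro y; rw [hR0, hcdef]; field_simp
  have hcpos : 0 < c := by
    have h1 : β klast / γ klast ≤ c := by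
      rw [hcdef]
      exact Finset.single_le_sum (f := fun j => β j / γ j)
        (fun j _ => div_nonneg (hβ j) (hγ j).1.le) (Finset.mem_univ klast)
    have h2 : 0 < β klast / γ klast := div_pos hβk (hγ klast).1
    linarith
  have hA : c * S 0 < A := by
    have h1 : A = c * S 0 + ∑ j, (β j / γ j) * P j 0 := by
      rw [hAdef, hcdef, Finset.sum_mul, ← Finset.sum_add_distrib]
      exact Finset.sum_congr rfl fun j _ => by ring
    have hPk : 0 < P klast 0 := by
      have hmem : k ∈ Finset.Iic klast := by
        simp only [Finset.mem_Iic, Fin.le_def, hklast]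
        omega
      have := Finset.single_le_sum (f := fun i => I 0 i) (fun i _ => hI0 i) hmem
      calc (0:ℝ) < I 0 k := hkpos
        _ ≤ P klast 0 := by simp only [hPdef]; exact this
    have h2 : (β klast / γ klast) * P klast 0 ≤ ∑ j, (β j / γ j) * P j 0 :=
      Finset.single_le_sum (f := fun j => (β j / γ j) * P j 0)
        (fun j _ => mul_nonneg (div_nonneg (hβ j) (hγ j).1.le) (hPnn j 0))
        (Finset.mem_univ klast)
    have h3 : 0 < (β klast / γ klast) * P klast 0 :=
      mul_pos (div_pos hβk (hγ klast).1) hPk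
    linarith
  have hroot : ∀ y, 0 < y → y < S 0 → Real.log (S 0 / y) = A - c * y → c * y < 1 := by
    intro y hy hyS heq
    by_contra hcon
    push_neg at hcon
    have hgt : (1:ℝ) < S 0 / y := (one_lt_div hy).mpr hyS
    have h1 : Real.log (S 0 / y) < S 0 / y - 1 :=
      Real.log_lt_sub_one_of_pos (div_pos hS0 hy) (ne_of_gt hgt)
    have h2 : S 0 / y - 1 ≤ c * (S 0 - y) := by
      rw [div_sub_one hy.ne', div_le_iff₀ hy]
      nlinarith [mul_le_mul_of_nonneg_right hcon (by linarith : (0:ℝ) ≤ S 0 - y)]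
    have h3 : c * (S 0 - y) < A - c * y := by
      have hx : c * (S 0 - y) = c * S 0 - c * y := by ring
      rw [hx]
      linarith only [hA]
    rw [heq] at h1
    linarith only [h1, h2, h3]
  have hSroot : c * Sinf < 1 := hroot Sinf hSinfpos hSinfltS0 hEq
  have hinj : ∀ u v, 0 < u → u < v → c * v ≤ 1 →
      Real.log (S 0 / u) = A - c * u → Real.log (S 0 / v) = A - c * v → False := by
    intro u v hu huv hcv hequ heqv
    have hv : 0 < v := hu.trans huv
    have h1 : Real.log (u / v) < u / v - 1 :=
      Real.log_lt_sub_one_of_pos (div_pos hu hv) (ne_of_lt ((div_lt_one hv).mpr huv))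
    have h2 : Real.log (u / v) = Real.log u - Real.log v := Real.log_div hu.ne' hv.ne'
    have h3 : Real.log (S 0 / u) = Real.log (S 0) - Real.log u :=
      Real.log_div hS0.ne' hu.ne'
    have h4 : Real.log (S 0 / v) = Real.log (S 0) - Real.log v :=
      Real.log_div hS0.ne' hv.ne'
    have key : c * v - c * u = Real.log v - Real.log u := by
      rw [h3] at hequ; rw [h4] at heqv; linarith
    have h5 : u / v - 1 = (u - v) / v := div_sub_one hv.ne'
    have h6 : (v - u) / v < Real.log v - Real.log u := by
      rw [h2, h5] at h1
      have : (u - v) / v = -((v - u) / v) := by ring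
      rw [this] at h1
      linarith only [h1]
    have h7 : c * v - c * u ≤ (v - u) / v := by
      rw [le_div_iff₀ hv]
      nlinarith [mul_nonneg (sub_pos.mpr huv).le (sub_nonneg.mpr hcv), hv, huv]
    linarith only [key, h6, h7]
  refine ⟨⟨hSinfpos, hSinfltS0⟩, ?_, ?_, ?_⟩
  · rw [hRc Sinf, ← hAexpr]
    exact hEq
  · intro y hy heqy
    rw [hRc y, ← hAexpr] at heqy
    rcases lt_trichotomy y Sinf with h | h | h
    · exact absurd (hinj y Sinf hy.1 h hSroot.le heqy hEq) not_false
    · exact h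
    · exact absurd (hinj Sinf y hSinfpos h (hroot y hy.1 hy.2 heqy).le hEq heqy) not_false
  · have hNR : N / R0 = 1 / c := by
      rw [hR0]
      field_simp
    rw [hNR, lt_div_iff₀ hcpos]
    linarith [mul_comm c Sinf]
end

section
/- (Uniqueness for the final size function.) Let g(x) = log(S(0)/x) − K + δx where δ > 0, S(0) > 0, and K := ∑_{j=1}^n (βⱼ/γⱼ)(S(0) + ∑_{i=1}^j Iᵢ(0)) > δS(0) (which holds whenever some Iᵢ(0) > 0). Then g has exactly one zero in (0, S(0)), and this zero lies in (0, 1/δ). -/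
/-- log lower bound: `1 - 1/t < log t` for positive `t ≠ 1`. -/
lemma fsf_log_gt (t : ℝ) (ht : 0 < t) (ht1 : t ≠ 1) : 1 - 1 / t < Real.log t := by
  have h := Real.log_lt_sub_one_of_pos (x := 1 / t) (by positivity)
    (by rw [Ne, div_eq_one_iff_eq (ne_of_gt ht)]; exact fun h => ht1 h.symm)
  rw [Real.log_div one_ne_zero (ne_of_gt ht), Real.log_one] at h
  linarith

/-- g is strictly decreasing on `(0, 1/δ]`. -/
lemma fsf_anti (S0 δ K a b : ℝ) (hS0 : 0 < S0) (hδ : 0 < δ) (ha : 0 < a) (hab : a < b) (hb : b ≤ 1 / δ) :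
    Real.log (S0 / b) - K + δ * b < Real.log (S0 / a) - K + δ * a := by
  have hb0 : 0 < b := ha.trans hab
  have hba : (0:ℝ) < b / a := by positivity
  have hlog : 1 - a / b < Real.log (b / a) := by
    have := fsf_log_gt (b / a) hba (by
      intro h; rw [div_eq_one_iff_eq (ne_of_gt ha)] at h; exact hab.ne' h)
    rw [one_div_div] at this; exact this
  have h1 : Real.log (b / a) = Real.log b - Real.log a :=
    Real.log_div (ne_of_gt hb0) (ne_of_gt ha)
  have hδb : δ * b ≤ 1 := by
    rw [le_div_iff₀ hδ] at hb; linarith [mul_comm b δ]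
  have key : δ * (b - a) < Real.log b - Real.log a := by
    have h2 : 1 - a / b = (b - a) / b := by field_simp
    have h3 : δ * (b - a) ≤ (b - a) / b := by
      rw [div_eq_mul_inv, mul_comm]
      have : δ ≤ b⁻¹ := by
        rw [le_inv_comm₀ hδ hb0] at *; rwa [one_div] at hb
      exact mul_le_mul_of_nonneg_left this (by linarith)
    rw [h1] at hlog; linarith
  have hSa : Real.log (S0 / a) = Real.log S0 - Real.log a :=
    Real.log_div (ne_of_gt hS0) (ne_of_gt ha)
  have hSb : Real.log (S0 / b) = Real.log S0 - Real.log b :=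
    Real.log_div (ne_of_gt hS0) (ne_of_gt hb0)
  rw [hSa, hSb]; linarith

/-- g is strictly increasing on `[1/δ, ∞)`. -/
lemma fsf_mono (S0 δ K a b : ℝ) (hS0 : 0 < S0) (hδ : 0 < δ) (ha : 1 / δ ≤ a) (hab : a < b) :
    Real.log (S0 / a) - K + δ * a < Real.log (S0 / b) - K + δ * b := by
  have ha0 : 0 < a := lt_of_lt_of_le (by positivity) ha
  have hb0 : 0 < b := ha0.trans hab
  have hlog : Real.log (b / a) < b / a - 1 :=
    Real.log_lt_sub_one_of_pos (by positivity)
      (by rw [Ne, div_eq_one_iff_eq (ne_of_gt ha0)]; exact fun h => hab.ne' h)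
  have h1 : Real.log (b / a) = Real.log b - Real.log a :=
    Real.log_div (ne_of_gt hb0) (ne_of_gt ha0)
  have hδa : 1 ≤ δ * a := by
    rw [div_le_iff₀ hδ] at ha; linarith [mul_comm a δ]
  have h3 : b / a - 1 ≤ δ * (b - a) := by
    have h4 : b / a - 1 = (b - a) / a := by field_simp
    have h5 : (b - a) / a ≤ δ * (b - a) := by
      rw [div_eq_mul_inv]
      have hia : a⁻¹ ≤ δ := by
        rw [inv_le_comm₀ ha0 hδ]; rwa [one_div] at ha
      calc (b - a) * a⁻¹ ≤ (b - a) * δ := mul_le_mul_of_nonneg_left hia (by linarith)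
        _ = δ * (b - a) := mul_comm _ _
    linarith
  have hSa : Real.log (S0 / a) = Real.log S0 - Real.log a :=
    Real.log_div (ne_of_gt hS0) (ne_of_gt ha0)
  have hSb : Real.log (S0 / b) = Real.log S0 - Real.log b :=
    Real.log_div (ne_of_gt hS0) (ne_of_gt hb0)
  rw [hSa, hSb]; rw [h1] at hlog; linarith

/-- uniqueness for the final size function: let
`g(x) = log(S(0)/x) − K + δx` with `δ = ∑ⱼ βⱼ/γⱼ > 0`, `S(0) > 0`, and
`K = ∑ⱼ (βⱼ/γⱼ)(S(0) + ∑_{i≤j} Iᵢ(0)) > δ S(0)`. Then `g` has exactly one zero in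
`(0, S(0))`, and this zero lies in `(0, 1/δ)`. -/
theorem final_size_function_unique_zero
    (n : ℕ) (hn : 0 < n) (S0 δ K : ℝ) (hS0 : 0 < S0)
    (γ β I0 : Fin n → ℝ) (hγ : ∀ j, γ j ∈ Set.Ioo (0 : ℝ) 1) (hβ : ∀ j, 0 ≤ β j)
    (hδ : δ = ∑ j, β j / γ j) (hδpos : 0 < δ)
    (hK : K = ∑ j, (β j / γ j) * (S0 + ∑ i ∈ Finset.Iic j, I0 i))
    (hKδ : δ * S0 < K) :
    (∃! x : ℝ, x ∈ Set.Ioo 0 S0 ∧ Real.log (S0 / x) - K + δ * x = 0) ∧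
    (∀ x ∈ Set.Ioo (0 : ℝ) S0, Real.log (S0 / x) - K + δ * x = 0 → x < 1 / δ) := by
  clear hδ hK hγ hβ hn
  set g : ℝ → ℝ := fun x => Real.log (S0 / x) - K + δ * x with hg
  have hK0 : 0 < K := lt_trans (by positivity) hKδ
  have hgS0 : g S0 = δ * S0 - K := by
    simp [hg, div_self (ne_of_gt hS0)]; ring
  have hgS0neg : g S0 < 0 := by rw [hgS0]; linarith
  -- Part 2: any zero in (0, S0) is < 1/δ
  have part2 : ∀ x ∈ Set.Ioo (0 : ℝ) S0, g x = 0 → x < 1 / δ := by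
    intro x hx hgx
    by_contra h
    push_neg at h
    have := fsf_mono S0 δ K x S0 hS0 hδpos h hx.2
    simp only [hg] at this hgS0neg hgx
    linarith
  refine ⟨?_, part2⟩
  -- Existence via IVT
  set x₀ : ℝ := S0 * Real.exp (-(K + 1)) with hx₀def
  have hx₀pos : 0 < x₀ := by positivity
  have hexp : (0:ℝ) < Real.exp (-(K + 1)) := Real.exp_pos _
  have hx₀S0 : x₀ < S0 := by
    have h1 : Real.exp (-(K + 1)) < 1 := Real.exp_lt_one_iff.mpr (by linarith)
    calc x₀ = S0 * Real.exp (-(K + 1)) := rfl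
      _ < S0 * 1 := by exact mul_lt_mul_of_pos_left h1 hS0
      _ = S0 := mul_one S0
  have hx₀δ : x₀ < 1 / δ := by
    have h1 : (K + 1) + 1 ≤ Real.exp (K + 1) := Real.add_one_le_exp (K + 1)
    have h2 : Real.exp (-(K + 1)) = (Real.exp (K + 1))⁻¹ := Real.exp_neg _
    have h3 : (0:ℝ) < Real.exp (K + 1) := Real.exp_pos _
    have h4 : Real.exp (-(K + 1)) * Real.exp (K + 1) = 1 := by
      rw [h2]; exact inv_mul_cancel₀ (ne_of_gt h3)
    rw [lt_div_iff₀ hδpos, hx₀def]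
    nlinarith [mul_lt_mul_of_pos_right (show δ * S0 < Real.exp (K + 1) by linarith) hexp]
  have hgx₀ : g x₀ = 1 + δ * x₀ := by
    have h4 : S0 / x₀ = Real.exp (K + 1) := by
      rw [hx₀def, Real.exp_neg]
      field_simp
    simp only [hg, h4, Real.log_exp]
    ring
  have hgx₀pos : 0 < g x₀ := by rw [hgx₀]; positivity
  set b : ℝ := min S0 (1 / δ) with hb
  have hbS0 : b ≤ S0 := min_le_left _ _
  have hbδ : b ≤ 1 / δ := min_le_right _ _
  have hx₀b : x₀ < b := lt_min hx₀S0 hx₀δ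
  have hgbneg : g b < 0 := by
    rcases le_total S0 (1 / δ) with h | h
    · rw [hb, min_eq_left h]; exact hgS0neg
    · rw [hb, min_eq_right h]
      rcases lt_or_eq_of_le h with h' | h'
      · have := fsf_mono S0 δ K (1 / δ) S0 hS0 hδpos le_rfl h'
        simp only [hg] at this hgS0neg ⊢
        linarith
      · rw [h']; exact hgS0neg
  have hcont : ContinuousOn g (Set.Icc x₀ b) := by
    apply ContinuousOn.add
    · apply ContinuousOn.sub
      · apply ContinuousOn.log
        · exact continuousOn_const.div continuousOn_id
            (fun x hx => ne_of_gt (lt_of_lt_of_le hx₀pos hx.1))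
        · intro x hx
          exact div_ne_zero (ne_of_gt hS0) (ne_of_gt (lt_of_lt_of_le hx₀pos hx.1))
      · exact continuousOn_const
    · exact continuousOn_const.mul continuousOn_id
  have hivt := intermediate_value_Ioo' (le_of_lt hx₀b) hcont
  have h0mem : (0:ℝ) ∈ Set.Ioo (g b) (g x₀) := ⟨hgbneg, hgx₀pos⟩
  obtain ⟨c, hc, hgc⟩ := hivt h0mem
  refine ⟨c, ⟨⟨lt_trans hx₀pos hc.1, lt_of_lt_of_le hc.2 hbS0⟩, hgc⟩, ?_⟩
  -- uniqueness
  intro y hy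
  have hc' : c ∈ Set.Ioo 0 S0 := ⟨lt_trans hx₀pos hc.1, lt_of_lt_of_le hc.2 hbS0⟩
  have hyδ : y < 1 / δ := part2 y hy.1 hy.2
  have hcδ : c < 1 / δ := part2 c hc' hgc
  rcases lt_trichotomy y c with h | h | h
  · exfalso
    have := fsf_anti S0 δ K y c hS0 hδpos hy.1.1 h (le_of_lt hcδ)
    rw [hy.2] at this
    simp only [hg] at hgc
    linarith
  · exact h
  · exfalso
    have := fsf_anti S0 δ K c y hS0 hδpos hc'.1 h (le_of_lt hyδ)
    rw [hy.2] at this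
    simp only [hg] at hgc
    linarith
end

section
/- (Monotonicity propagation.) For the staged progression system, if at some time t₀ one has I(t₀+1) < I(t₀) componentwise (strictly in all components), then I(t+1) < I(t) componentwise for all t ≥ t₀. -/
open Filter Topology

lemma my_fderiv_nonneg {n : ℕ} {N : ℝ} {φ : (Fin n → ℝ) → ℝ} (hφ : HypH n N φ)
    {y d : Fin n → ℝ} (hy : y ∈ stateSet n N) (hd : ∀ j, 0 ≤ d j) :
    0 ≤ fderiv ℝ φ y d := by
  have hrep : d = ∑ j, d j • (Pi.single j (1:ℝ) : Fin n → ℝ) := by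
    funext k
    simp [Finset.sum_apply, Pi.single_apply]
  rw [hrep, map_sum]
  refine Finset.sum_nonneg fun j _ => ?_
  rw [map_smul]
  exact mul_nonneg (hd j) (hφ.2.2.2.1 y hy j)

lemma my_phi_mono {n : ℕ} {N : ℝ} {φ : (Fin n → ℝ) → ℝ} (hφ : HypH n N φ)
    {x y : Fin n → ℝ} (hx0 : ∀ j, 0 ≤ x j) (hxy : ∀ j, x j ≤ y j)
    (hy : y ∈ stateSet n N) : φ x ≤ φ y := by
  set d : Fin n → ℝ := y - x with hddef
  have hd : ∀ j, 0 ≤ d j := fun j => sub_nonneg.2 (hxy j)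
  have hSd : 0 ≤ ∑ j, d j := Finset.sum_nonneg fun j _ => hd j
  have hSxy : ∑ j, x j + ∑ j, d j = ∑ j, y j := by
    rw [← Finset.sum_add_distrib]; simp [hddef]
  set g : ℝ → Fin n → ℝ := fun s => x + s • d with hgdef
  have hmem : ∀ s ∈ Set.Icc (0 : ℝ) 1, g s ∈ stateSet n N := by
    intro s hs
    constructor
    · intro j
      have h1 := hd j; have h2 := hx0 j
      have : 0 ≤ s * d j := mul_nonneg hs.1 h1
      simp only [hgdef, Pi.add_apply, Pi.smul_apply, smul_eq_mul]
      linarith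
    · have : ∑ j, g s j = ∑ j, x j + s * ∑ j, d j := by
        simp [hgdef, Finset.sum_add_distrib, Finset.mul_sum]
      rw [this]
      have := hy.2
      nlinarith [hs.2]
  have hdiff : Differentiable ℝ φ := hφ.1.differentiable (by norm_num)
  have hg' : ∀ s : ℝ, HasDerivAt g d s := by
    intro s
    have h1 : HasDerivAt (fun s : ℝ => s • d) ((1 : ℝ) • d) s :=
      (hasDerivAt_id s).smul_const d
    rw [one_smul] at h1
    exact h1.const_add x
  have hgφ : ∀ s : ℝ, HasDerivAt (fun s => φ (g s)) (fderiv ℝ φ (g s) d) s := fun s =>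
    (hdiff (g s)).hasFDerivAt.comp_hasDerivAt s (hg' s)
  have hmono : MonotoneOn (fun s => φ (g s)) (Set.Icc (0 : ℝ) 1) := by
    apply monotoneOn_of_deriv_nonneg (convex_Icc 0 1)
    · exact Continuous.continuousOn
        (hdiff.continuous.comp (continuous_const.add (continuous_id.smul continuous_const)))
    · intro s _
      exact (hgφ s).differentiableAt.differentiableWithinAt
    · intro s hs
      rw [(hgφ s).deriv]
      exact my_fderiv_nonneg hφ (hmem s (interior_subset hs)) hd
  have h01 := hmono (Set.left_mem_Icc.2 zero_le_one) (Set.right_mem_Icc.2 zero_le_one) zero_le_one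
  simpa [hgdef, hddef] using h01

lemma my_invariant {m : ℕ} {N : ℝ}
    {γ : Fin (m + 1) → ℝ} (hγ : ∀ j, γ j ∈ Set.Ioo (0 : ℝ) 1)
    {φ : (Fin (m + 1) → ℝ) → ℝ} (hφ : HypH (m + 1) N φ)
    {S : ℕ → ℝ} {I : ℕ → Fin (m + 1) → ℝ}
    (hsys : SPSystem γ φ S I)
    (h0 : 0 ≤ S 0 ∧ (∀ j, 0 ≤ I 0 j) ∧ S 0 + ∑ j, I 0 j ≤ N) :
    ∀ t, 0 ≤ S t ∧ (∀ j, 0 ≤ I t j) ∧ S t + ∑ j, I t j ≤ N := by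
  intro t
  induction t with
  | zero => exact h0
  | succ t ih =>
    obtain ⟨hS, hI, hT⟩ := ih
    have hstate : I t ∈ stateSet (m + 1) N := by
      refine ⟨hI, ?_⟩
      have : 0 ≤ ∑ j, I t j := Finset.sum_nonneg fun j _ => hI j
      linarith
    obtain ⟨hφ0, hφ1⟩ := hφ.2.2.1 (I t) hstate
    have hγ0 := hγ ⟨0, Nat.succ_pos m⟩
    have heq0 : I (t + 1) (0 : Fin (m + 1)) =
        (1 - γ ⟨0, Nat.succ_pos m⟩) * I t ⟨0, Nat.succ_pos m⟩ + φ (I t) * S t :=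
      hsys.2.1 t (Nat.succ_pos m)
    have heqs : ∀ j : Fin m, I (t + 1) j.succ =
        (1 - γ j.succ) * I t j.succ + γ j.castSucc * I t j.castSucc := by
      intro j
      have h := hsys.2.2 t j.castSucc (by simpa using j.isLt)
      convert h using 2 <;> rfl
    have hS' : 0 ≤ S (t + 1) := by
      rw [hsys.1 t]; nlinarith
    have hI' : ∀ j, 0 ≤ I (t + 1) j := by
      intro j
      induction j using Fin.cases with
      | zero =>
        rw [heq0]
        have := hI ⟨0, Nat.succ_pos m⟩
        nlinarith [hγ0.1, hγ0.2]
      | succ j =>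
        rw [heqs j]
        have h1 := hγ j.succ; have h2 := hγ j.castSucc
        have := hI j.succ; have := hI j.castSucc
        nlinarith [h1.1, h1.2, h2.1, h2.2]
    refine ⟨hS', hI', ?_⟩
    have hsum : ∑ j, I (t + 1) j ≤ φ (I t) * S t + ∑ j, I t j := by
      rw [Fin.sum_univ_succ, heq0]
      have e1 : ∑ j : Fin m, I (t + 1) j.succ =
          ∑ j : Fin m, (1 - γ j.succ) * I t j.succ +
          ∑ j : Fin m, γ j.castSucc * I t j.castSucc := by
        rw [← Finset.sum_add_distrib]
        exact Finset.sum_congr rfl fun j _ => heqs j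
      rw [e1]
      have e2 : ∑ j : Fin m, γ j.castSucc * I t j.castSucc ≤ ∑ j, γ j * I t j := by
        rw [Fin.sum_univ_castSucc (f := fun j => γ j * I t j)]
        have hl := hγ (Fin.last m)
        nlinarith [hI (Fin.last m), hl.1, hl.2]
      have hz : (⟨0, Nat.succ_pos m⟩ : Fin (m + 1)) = 0 := rfl
      rw [hz]
      have e3 : (1 - γ (0 : Fin (m + 1))) * I t (0 : Fin (m + 1)) +
          ∑ j : Fin m, (1 - γ j.succ) * I t j.succ + ∑ j, γ j * I t j = ∑ j, I t j := by
        rw [← Fin.sum_univ_succ (f := fun j => (1 - γ j) * I t j), ← Finset.sum_add_distrib]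
        exact Finset.sum_congr rfl fun j _ => by ring
      linarith
    have : S (t + 1) = (1 - φ (I t)) * S t := hsys.1 t
    nlinarith

/-- monotonicity propagation: if at some time `t₀` every infected class
strictly decreases, i.e. `I(t₀+1) < I(t₀)` componentwise, then `I(t+1) < I(t)`
componentwise for all `t ≥ t₀`. -/
theorem sp_monotonicity_propagation
    (n : ℕ) (hn : 0 < n) (N : ℝ) (hN : 0 < N)
    (γ : Fin n → ℝ) (hγ : ∀ j, γ j ∈ Set.Ioo (0 : ℝ) 1)
    (φ : (Fin n → ℝ) → ℝ) (hφ : HypH n N φ)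
    (S : ℕ → ℝ) (I : ℕ → Fin n → ℝ)
    (hsys : SPSystem γ φ S I) (hic : AdmissibleIC N S I)
    (t₀ : ℕ) (hdec : ∀ j : Fin n, I (t₀ + 1) j < I t₀ j) :
    ∀ t ≥ t₀, ∀ j : Fin n, I (t + 1) j < I t j := by
  obtain ⟨m, rfl⟩ : ∃ m, n = m + 1 := ⟨n - 1, (Nat.succ_pred_eq_of_pos hn).symm⟩
  have hinv := my_invariant hγ hφ hsys ⟨hic.1.le, hic.2.1, hic.2.2.2⟩
  intro t ht
  induction t, ht using Nat.le_induction with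
  | base => exact hdec
  | succ t ht IH =>
    obtain ⟨hSt, hIt, hTt⟩ := hinv t
    obtain ⟨hSt1, hIt1, hTt1⟩ := hinv (t + 1)
    have hstate : I t ∈ stateSet (m + 1) N := by
      refine ⟨hIt, ?_⟩
      have : 0 ≤ ∑ j, I t j := Finset.sum_nonneg fun j _ => hIt j
      linarith
    obtain ⟨hφ0, hφ1⟩ := hφ.2.2.1 (I t) hstate
    have hφmono : φ (I (t + 1)) ≤ φ (I t) :=
      my_phi_mono hφ hIt1 (fun j => (IH j).le) hstate
    have hstate1 : I (t + 1) ∈ stateSet (m + 1) N := by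
      refine ⟨hIt1, ?_⟩
      have : 0 ≤ ∑ j, I (t + 1) j := Finset.sum_nonneg fun j _ => hIt1 j
      linarith
    obtain ⟨hφ0', _⟩ := hφ.2.2.1 (I (t + 1)) hstate1
    have hSle : S (t + 1) ≤ S t := by rw [hsys.1 t]; nlinarith
    have hprod : φ (I (t + 1)) * S (t + 1) ≤ φ (I t) * S t :=
      mul_le_mul hφmono hSle hSt1 hφ0
    intro j
    induction j using Fin.cases with
    | zero =>
      have h1 := hsys.2.1 (t + 1) (Nat.succ_pos m)
      have h2 := hsys.2.1 t (Nat.succ_pos m)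
      have hz : (⟨0, Nat.succ_pos m⟩ : Fin (m + 1)) = 0 := rfl
      rw [hz] at h1 h2
      rw [h1, h2]
      have hγ0 := hγ (0 : Fin (m + 1))
      have := IH (0 : Fin (m + 1))
      nlinarith [hγ0.1, hγ0.2]
    | succ j =>
      have heqs : ∀ s, I (s + 1) j.succ =
          (1 - γ j.succ) * I s j.succ + γ j.castSucc * I s j.castSucc := by
        intro s
        have h := hsys.2.2 s j.castSucc (by simpa using j.isLt)
        convert h using 2 <;> rfl
      have e1 := heqs (t + 1); have e2 := heqs t
      have h1 := hγ j.succ; have h2 := hγ j.castSucc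
      have hs := IH j.succ; have hc := IH j.castSucc
      have p1 : 0 < (1 - γ j.succ) * (I t j.succ - I (t + 1) j.succ) :=
        mul_pos (by linarith [h1.2]) (by linarith)
      have p2 : 0 < γ j.castSucc * (I t j.castSucc - I (t + 1) j.castSucc) :=
        mul_pos h2.1 (by linarith)
      nlinarith [p1, p2]
end

section
/- (Eventual unimodality when only the last class is infectious.) Suppose φ(I) = φ̂(Iₙ) with φ̂ satisfying Hypothesis (H) restricted to one variable and the additional bound φ̂(x) ≥ rₙx/(1+rₙx) for x ∈ (0,N], where rₙ = φ̂'(0). If t* ≥ 0 satisfies Z(t*+1) < Z(t*), then Z(t+1) ≤ Z(t) for all t ≥ t*. -/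
open Filter Topology

/-- eventual unimodality when only the last class is infectious: with
`φ(I) = φ̂(Iₙ)`, `rₙ = φ̂'(0) > 0`, and the additional bound
`φ̂(x) ≥ rₙx/(1+rₙx)` on `(0,N]`, if `Z(t*+1) < Z(t*)` for some `t* ≥ 0`, then
`Z(t+1) ≤ Z(t)` for all `t ≥ t*`, where `Z(t) = ∑ⱼ Iⱼ(t)`. -/

theorem sp_eventual_unimodality_last_class
    (n : ℕ) (hn : 0 < n) (N : ℝ) (hN : 0 < N)
    (γ : Fin n → ℝ) (hγ : ∀ j, γ j ∈ Set.Ioo (0 : ℝ) 1)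
    (φhat : ℝ → ℝ) (rn : ℝ) (hrn : 0 < rn)
    (hC2 : ContDiff ℝ 2 φhat) (hφ0 : φhat 0 = 0)
    (hrange : ∀ x ∈ Set.Icc (0 : ℝ) N, φhat x ∈ Set.Ico (0 : ℝ) 1)
    (hmono : MonotoneOn φhat (Set.Icc 0 N))
    (hconc : ConcaveOn ℝ (Set.Icc 0 N) φhat)
    (hderiv : deriv φhat 0 = rn)
    (hlow : ∀ x ∈ Set.Ioc (0 : ℝ) N, rn * x / (1 + rn * x) ≤ φhat x)
    (φ : (Fin n → ℝ) → ℝ)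
    (hφ : φ = fun I => φhat (I ⟨n - 1, Nat.sub_lt hn Nat.one_pos⟩))
    (S : ℕ → ℝ) (I : ℕ → Fin n → ℝ)
    (hsys : SPSystem γ φ S I) (hic : AdmissibleIC N S I)
    (tstar : ℕ) (hdec : ∑ j, I (tstar + 1) j < ∑ j, I tstar j) :
    ∀ t ≥ tstar, ∑ j, I (t + 1) j ≤ ∑ j, I t j := by
  subst hφ
  obtain ⟨m, rfl⟩ := Nat.exists_eq_succ_of_ne_zero hn.ne'
  obtain ⟨hSrec, hI1, hIsucc⟩ := hsys
  obtain ⟨hS0, hI0, hI0ne, hsum0⟩ := hic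
  set L : Fin (m + 1) := ⟨m, Nat.lt_succ_self m⟩ with hLdef
  -- cleaned recurrences
  have eS : ∀ t, S (t + 1) = (1 - φhat (I t L)) * S t := fun t => hSrec t
  have e0 : ∀ t, I (t + 1) 0 = (1 - γ 0) * I t 0 + φhat (I t L) * S t :=
    fun t => hI1 t (Nat.succ_pos m)
  have es : ∀ t, ∀ j : Fin m, I (t + 1) j.succ
      = (1 - γ j.succ) * I t j.succ + γ j.castSucc * I t j.castSucc :=
    fun t j => hIsucc t j.castSucc (Nat.succ_lt_succ j.isLt)
  -- upper bound φhat y ≤ rn * y on [0, N]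
  have hub : ∀ y ∈ Set.Icc (0:ℝ) N, φhat y ≤ rn * y := by
    intro y hy
    rcases eq_or_lt_of_le hy.1 with h0 | h0
    · simp [← h0, hφ0]
    · have hdiff : DifferentiableAt ℝ φhat 0 :=
        (hC2.differentiable (by norm_num)).differentiableAt
      have hder : HasDerivAt φhat rn 0 := hderiv ▸ hdiff.hasDerivAt
      have hslope : Tendsto (slope φhat 0) (𝓝[>] (0:ℝ)) (𝓝 rn) :=
        (hasDerivAt_iff_tendsto_slope.mp hder).mono_left
          (nhdsWithin_mono 0 (fun x hx => ne_of_gt hx))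
      have key : φhat y / y ≤ rn := by
        refine ge_of_tendsto hslope ?_
        filter_upwards [Ioo_mem_nhdsGT_of_mem (Set.left_mem_Ico.mpr h0)] with x hx
        have hx0 : 0 < x := hx.1
        have hxy : x < y := hx.2
        -- concavity: φhat x ≥ (x/y) * φhat y
        have hy0 : (0:ℝ) < y := h0
        have ha : (0:ℝ) ≤ 1 - x / y := by
          have : x / y ≤ 1 := by rw [div_le_one hy0]; exact hxy.le
          linarith
        have hb : (0:ℝ) ≤ x / y := by positivity
        have hab : (1 - x / y) + x / y = 1 := by ring
        have hcc : (1 - x / y) • φhat 0 + (x / y) • φhat y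
            ≤ φhat ((1 - x / y) • (0:ℝ) + (x / y) • y) :=
          hconc.2 (Set.left_mem_Icc.mpr hN.le) hy ha hb hab
        have hxx : (1 - x / y) • (0:ℝ) + (x / y) • y = x := by
          simp [smul_eq_mul]; field_simp
        rw [hxx] at hcc
        have hcc' : (x / y) * φhat y ≤ φhat x := by
          simpa [hφ0, smul_eq_mul] using hcc
        have hsl : slope φhat 0 x = φhat x / x := by
          simp [slope_def_field, hφ0, div_eq_inv_mul]
        rw [hsl]
        rw [div_le_div_iff₀ h0 hx0]
        calc φhat y * x = (x / y * φhat y) * y := by field_simp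
          _ ≤ φhat x * y := by
              have hy0 : (0:ℝ) < y := h0
              nlinarith [hcc']
      calc φhat y = (φhat y / y) * y := by field_simp
        _ ≤ rn * y := by nlinarith [key, h0]
  -- Z recursion
  have hZ : ∀ t, ∑ j, I (t + 1) j
      = ∑ j, I t j - γ L * I t L + φhat (I t L) * S t := by
    intro t
    have hA := Fin.sum_univ_succ (fun j => I t j)
    have hB := Fin.sum_univ_succ (fun j => γ j * I t j)
    have hC := Fin.sum_univ_castSucc (fun j => γ j * I t j)
    have hD := Fin.sum_univ_succ (fun j => I (t + 1) j)
    have hsplit : ∑ j : Fin m, I (t + 1) j.succ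
        = ((∑ j : Fin m, I t j.succ) - ∑ j : Fin m, γ j.succ * I t j.succ)
          + ∑ j : Fin m, γ j.castSucc * I t j.castSucc := by
      rw [← Finset.sum_sub_distrib, ← Finset.sum_add_distrib]
      exact Finset.sum_congr rfl (fun j _ => by rw [es t j]; ring
        )
    have hlast : Fin.last m = L := rfl
    rw [hlast] at hC
    rw [hD, e0 t, hsplit]
    linarith [hA, hB, hC]
  -- invariants
  have hinv : ∀ t, (∀ j, 0 ≤ I t j) ∧ 0 ≤ S t ∧ S t + ∑ j, I t j ≤ N := by
    intro t
    induction t with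
    | zero => exact ⟨hI0, hS0.le, hsum0⟩
    | succ t ih =>
      obtain ⟨hIpos, hSpos, hle⟩ := ih
      have hxmem : I t L ∈ Set.Icc (0:ℝ) N := by
        constructor
        · exact hIpos L
        · have h1 : I t L ≤ ∑ j, I t j :=
            Finset.single_le_sum (f := fun j => I t j) (fun j _ => hIpos j)
              (Finset.mem_univ L)
          linarith
      have hφx := hrange _ hxmem
      have hγL := hγ L
      refine ⟨?_, ?_, ?_⟩
      · intro j
        refine Fin.cases ?_ (fun k => ?_) j
        · rw [e0 t]
          have := hγ 0
          have h1 : 0 ≤ (1 - γ 0) * I t 0 :=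
            mul_nonneg (by linarith [this.2]) (hIpos 0)
          have h2 : 0 ≤ φhat (I t L) * S t := mul_nonneg hφx.1 hSpos
          linarith
        · rw [es t k]
          have h1 := hγ k.succ
          have h2 := hγ k.castSucc
          have h3 : 0 ≤ (1 - γ k.succ) * I t k.succ :=
            mul_nonneg (by linarith [h1.2]) (hIpos k.succ)
          have h4 : 0 ≤ γ k.castSucc * I t k.castSucc :=
            mul_nonneg h2.1.le (hIpos k.castSucc)
          linarith
      · rw [eS t]
        exact mul_nonneg (by linarith [hφx.2]) hSpos
      · rw [eS t, hZ t]
        have h1 : 0 ≤ γ L * I t L := mul_nonneg hγL.1.le (hIpos L)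
        ring_nf
        nlinarith
  -- at tstar: strict inequality
  have hstar : φhat (I tstar L) * S tstar < γ L * I tstar L := by
    have := hZ tstar
    linarith
  have hImem : ∀ t, I t L ∈ Set.Icc (0:ℝ) N := by
    intro t
    obtain ⟨hIpos, hSpos, hle⟩ := hinv t
    refine ⟨hIpos L, ?_⟩
    have h1 : I t L ≤ ∑ j, I t j :=
      Finset.single_le_sum (f := fun j => I t j) (fun j _ => hIpos j) (Finset.mem_univ L)
    linarith
  have hγL := hγ L
  have hxpos : 0 < I tstar L := by
    have h1 : 0 ≤ φhat (I tstar L) * S tstar :=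
      mul_nonneg (hrange _ (hImem tstar)).1 (hinv tstar).2.1
    nlinarith [hγL.1]
  have hplow : rn * I tstar L / (1 + rn * I tstar L) ≤ φhat (I tstar L) :=
    hlow _ ⟨hxpos, (hImem tstar).2⟩
  have hppos : 0 < φhat (I tstar L) := by
    have hd : 0 < 1 + rn * I tstar L := by nlinarith
    have : 0 < rn * I tstar L / (1 + rn * I tstar L) := by positivity
    linarith
  -- key bound : S (tstar + 1) ≤ γ L / rn
  have hSbound1 : S (tstar + 1) ≤ γ L / rn := by
    rw [eS tstar]
    set x := I tstar L
    set p := φhat x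
    set s := S tstar
    set g := γ L
    have hd : 0 < 1 + rn * x := by nlinarith
    have f2 : rn * x ≤ p * (1 + rn * x) := by
      rw [div_le_iff₀ hd] at hplow; linarith
    have hp1 : p < 1 := (hrange _ (hImem tstar)).2
    have hs0 : 0 ≤ s := (hinv tstar).2.1
    -- rn * (1 - p) * s * p ≤ g * p, then divide by p
    have step : rn * ((1 - p) * s) * p ≤ g * p := by
      nlinarith [mul_le_mul_of_nonneg_left hstar.le
          (mul_nonneg hrn.le (by linarith : (0:ℝ) ≤ 1 - p)),
        mul_le_mul_of_nonneg_left f2 hγL.1.le]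
    have step2 : rn * ((1 - p) * s) ≤ g := le_of_mul_le_mul_right step hppos
    rw [le_div_iff₀ hrn]
    linarith
  -- S is nonincreasing
  have hSmono : ∀ t, S (t + 1) ≤ S t := by
    intro t
    rw [eS t]
    have h1 := (hrange _ (hImem t)).1
    have h2 := (hinv t).2.1
    nlinarith
  have hSb : ∀ t, tstar + 1 ≤ t → S t ≤ γ L / rn := by
    intro t ht
    induction t with
    | zero => omega
    | succ t ih =>
      rcases Nat.lt_or_ge (tstar + 1) (t + 1) with h | h
      · have := ih (by omega)
        linarith [hSmono t]
      · have : t + 1 = tstar + 1 := by omega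
        rw [this]; exact hSbound1
  -- conclusion
  intro t ht
  rcases eq_or_lt_of_le ht with rfl | ht'
  · exact hdec.le
  · have hSt : S t ≤ γ L / rn := hSb t (by omega)
    have hy := hImem t
    have hup := hub _ hy
    have hSpos := (hinv t).2.1
    rw [hZ t]
    have h1 : φhat (I t L) * S t ≤ rn * I t L * S t :=
      mul_le_mul_of_nonneg_right hup hSpos
    have h2 : rn * I t L * S t ≤ rn * I t L * (γ L / rn) :=
      mul_le_mul_of_nonneg_left hSt (by nlinarith [hy.1])
    have h3 : rn * I t L * (γ L / rn) = γ L * I t L := by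
      field_simp
    linarith
end
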